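/- arXiv:1306.4434 — 7 statements merged into one kernel-verified Lean document; each statement's English description precedes it below -/
import Mathlib

section
/- If a graph G satisfies χ(G) ≤ 4 and χ'(G) = Δ(G), then the total chromatic number satisfies χ''(G) ≤ Δ(G) + 2. -/
open Finset

lemma min'_congr_aux {α : Type*} [LinearOrder α] {s t : Finset α} (h : s = t)
    (hs : s.Nonempty) (ht : t.Nonempty) : s.min' hs = t.min' ht := by subst h; rfl

lemma max'_congr_aux {α : Type*} [LinearOrder α] {s t : Finset α} (h : s = t)
    (hs : s.Nonempty) (ht : t.Nonempty) : s.max' hs = t.max' ht := by subst h; rfl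

lemma two_list_color {ι : Type*} [DecidableEq ι] {K : ℕ} (hK : 0 < K)
    (adj : ι → ι → Prop) [DecidableRel adj]
    (hsym : ∀ u v, adj u v → adj v u) (hirr : ∀ u, ¬ adj u u)
    (b : ι → Bool) :
    ∀ n (S : Finset ι), S.card ≤ n → ∀ L : ι → Finset (Fin K),
      (∀ u ∈ S, ∀ v ∈ S, adj u v → b u ≠ b v) →
      (∀ v ∈ S, (S.filter (adj v)).card ≤ 2) →
      (∀ v ∈ S, 1 ≤ (L v).card) →
      (∀ v ∈ S, (L v).card = 1 → (S.filter (adj v)).card ≤ 1) →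
      (∀ v ∈ S, ∀ w ∈ S, (L v).card = 1 → (L w).card = 1 → v = w) →
      ∃ f : ι → Fin K, (∀ v ∈ S, f v ∈ L v) ∧
        ∀ u ∈ S, ∀ v ∈ S, adj u v → f u ≠ f v := by
  intro n
  induction n with
  | zero =>
    intro S hS L _ _ _ _ _
    have hS0 : S = ∅ := card_eq_zero.mp (Nat.le_zero.mp hS)
    subst hS0
    exact ⟨fun _ => ⟨0, hK⟩, by simp, by simp⟩
  | succ n IH =>
    intro S hS L hb hdeg hlist hdef huniq
    -- a generic "color v with c and recurse" step
    have step : ∀ v ∈ S, ∀ c ∈ L v,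
        (∀ w ∈ S, w ≠ v → 2 ≤ (L w).card) →
        (S.filter (fun w => adj v w ∧ c ∈ L w)).card ≤ 1 →
        ∃ f : ι → Fin K, (∀ v ∈ S, f v ∈ L v) ∧
          ∀ u ∈ S, ∀ w ∈ S, adj u w → f u ≠ f w := by
      intro v hv c hc h2 hone
      set S' := S.erase v with hS'def
      set L' := fun w => if adj v w then (L w).erase c else L w with hL'def
      have hsub : S' ⊆ S := erase_subset _ _
      have hcard' : S'.card ≤ n := by
        have hc1 : S'.card = S.card - 1 := by rw [hS'def, card_erase_of_mem hv]
        omega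
      have hL'sub : ∀ w, L' w ⊆ L w := by
        intro w; simp only [hL'def]; split
        · exact erase_subset _ _
        · exact Subset.refl _
      have hfe : ∀ w, S'.filter (adj w) ⊆ S.filter (adj w) :=
        fun w => filter_subset_filter _ hsub
      have hL'big : ∀ w ∈ S', ¬ (adj v w ∧ c ∈ L w) → 2 ≤ (L' w).card := by
        intro w hw hnc
        have h2w := h2 w (hsub hw) (ne_of_mem_erase hw)
        simp only [hL'def]
        by_cases ha : adj v w
        · have hcn : c ∉ L w := fun hcc => hnc ⟨ha, hcc⟩
          rw [if_pos ha, erase_eq_of_notMem hcn]; exact h2w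
        · rw [if_neg ha]; exact h2w
      have hL'card : ∀ w ∈ S', 1 ≤ (L' w).card := by
        intro w hw
        have h2w := h2 w (hsub hw) (ne_of_mem_erase hw)
        simp only [hL'def]; split
        · have := pred_card_le_card_erase (s := L w) (a := c); omega
        · omega
      have hdef' : ∀ w ∈ S', (L' w).card = 1 → (S'.filter (adj w)).card ≤ 1 := by
        intro w hw h1
        have hac : adj v w ∧ c ∈ L w := by
          by_contra hnc
          have := hL'big w hw hnc; omega
        have hvin : v ∈ S.filter (adj w) := mem_filter.mpr ⟨hv, hsym _ _ hac.1⟩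
        have hfeq : S'.filter (adj w) = (S.filter (adj w)).erase v := by
          rw [hS'def]; exact filter_erase (p := adj w) v S
        rw [hfeq, card_erase_of_mem hvin]
        have := hdeg w (hsub hw); omega
      have huniq' : ∀ w₁ ∈ S', ∀ w₂ ∈ S', (L' w₁).card = 1 → (L' w₂).card = 1 → w₁ = w₂ := by
        intro w₁ hw₁ w₂ hw₂ h1 h2'
        have hac₁ : adj v w₁ ∧ c ∈ L w₁ := by
          by_contra hnc; have := hL'big w₁ hw₁ hnc; omega
        have hac₂ : adj v w₂ ∧ c ∈ L w₂ := by
          by_contra hnc; have := hL'big w₂ hw₂ hnc; omega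
        have m₁ : w₁ ∈ S.filter (fun w => adj v w ∧ c ∈ L w) :=
          mem_filter.mpr ⟨hsub hw₁, hac₁⟩
        have m₂ : w₂ ∈ S.filter (fun w => adj v w ∧ c ∈ L w) :=
          mem_filter.mpr ⟨hsub hw₂, hac₂⟩
        exact card_le_one.mp hone _ m₁ _ m₂
      obtain ⟨f', hf'mem, hf'prop⟩ := IH S' hcard' L'
        (fun u hu w hw ha => hb u (hsub hu) w (hsub hw) ha)
        (fun w hw => le_trans (card_le_card (hfe w)) (hdeg w (hsub hw)))
        hL'card hdef' huniq'
      refine ⟨Function.update f' v c, ?_, ?_⟩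
      · intro w hw
        by_cases hwv : w = v
        · rw [hwv, Function.update_self]; exact hc
        · rw [Function.update_of_ne hwv]
          exact hL'sub w (hf'mem w (mem_erase.mpr ⟨hwv, hw⟩))
      · intro u hu w hw ha
        by_cases huv : u = v
        · have hwv : w ≠ v := fun h => hirr v (by rw [huv, h] at ha; exact ha)
          rw [huv, Function.update_self, Function.update_of_ne hwv]
          have hmem' := hf'mem w (mem_erase.mpr ⟨hwv, hw⟩)
          have hav : adj v w := by rw [huv] at ha; exact ha
          simp only [hL'def, if_pos hav] at hmem'
          exact fun h => (ne_of_mem_erase hmem') h.symm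
        · by_cases hwv : w = v
          · rw [hwv, Function.update_self, Function.update_of_ne huv]
            have hmem' := hf'mem u (mem_erase.mpr ⟨huv, hu⟩)
            have hav : adj v u := hsym _ _ (by rw [hwv] at ha; exact ha)
            simp only [hL'def, if_pos hav] at hmem'
            exact ne_of_mem_erase hmem'
          · rw [Function.update_of_ne huv, Function.update_of_ne hwv]
            exact hf'prop u (mem_erase.mpr ⟨huv, hu⟩) w (mem_erase.mpr ⟨hwv, hw⟩) ha
    by_cases hA : ∃ v ∈ S, (L v).card = 1
    · obtain ⟨v, hv, h1⟩ := hA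
      obtain ⟨c, hc⟩ := card_pos.mp (by omega : 0 < (L v).card)
      refine step v hv c hc ?_ ?_
      · intro w hw hwv
        have := hlist w hw
        have : (L w).card ≠ 1 := fun h => hwv (huniq w hw v hv h h1)
        omega
      · refine le_trans (card_le_card (monotone_filter_right S ?_)) (hdef v hv h1)
        intro w hw; exact fun h => h.1
    · push_neg at hA
      have hall2 : ∀ v ∈ S, 2 ≤ (L v).card := by
        intro v hv
        have := hlist v hv
        have := hA v hv
        omega
      by_cases hB : ∃ v ∈ S, (S.filter (adj v)).card < (L v).card
      · obtain ⟨v, hv, hlt⟩ := hB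
        set S' := S.erase v with hS'def
        have hsub : S' ⊆ S := erase_subset _ _
        have hcard' : S'.card ≤ n := by
          have hc1 : S'.card = S.card - 1 := by rw [hS'def, card_erase_of_mem hv]
          omega
        obtain ⟨f', hf'mem, hf'prop⟩ := IH S' hcard' L
          (fun u hu w hw ha => hb u (hsub hu) w (hsub hw) ha)
          (fun w hw => le_trans (card_le_card (filter_subset_filter _ hsub)) (hdeg w (hsub hw)))
          (fun w hw => hlist w (hsub hw))
          (fun w hw h1 => absurd h1 (by have := hall2 w (hsub hw); omega))
          (fun w hw w' hw' h1 _ => absurd h1 (by have := hall2 w (hsub hw); omega))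
        have hSfilter : S'.filter (adj v) = S.filter (adj v) := by
          rw [hS'def, filter_erase, erase_eq_of_notMem]
          simp only [mem_filter, not_and]
          exact fun _ => hirr v
        set F := (S'.filter (adj v)).image f' with hFdef
        have hFcard : F.card < (L v).card := by
          calc F.card ≤ (S'.filter (adj v)).card := card_image_le
            _ = (S.filter (adj v)).card := by rw [hSfilter]
            _ < (L v).card := hlt
        have : ¬ (L v ⊆ F) := fun h => absurd (card_le_card h) (by omega)
        obtain ⟨c, hcL, hcF⟩ := not_subset.mp this
        refine ⟨Function.update f' v c, ?_, ?_⟩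
        · intro w hw
          by_cases hwv : w = v
          · rw [hwv, Function.update_self]; exact hcL
          · rw [Function.update_of_ne hwv]
            exact hf'mem w (mem_erase.mpr ⟨hwv, hw⟩)
        · intro u hu w hw ha
          by_cases huv : u = v
          · have hwv : w ≠ v := fun h => hirr v (by rw [huv, h] at ha; exact ha)
            rw [huv, Function.update_self, Function.update_of_ne hwv]
            intro h
            have hav : adj v w := by rw [huv] at ha; exact ha
            exact hcF (h ▸ mem_image_of_mem f' (mem_filter.mpr ⟨mem_erase.mpr ⟨hwv, hw⟩, hav⟩))
          · by_cases hwv : w = v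
            · rw [hwv, Function.update_self, Function.update_of_ne huv]
              intro h
              have hav : adj v u := hsym _ _ (by rw [hwv] at ha; exact ha)
              exact hcF (h ▸ mem_image_of_mem f'
                (mem_filter.mpr ⟨mem_erase.mpr ⟨huv, hu⟩, hav⟩))
            · rw [Function.update_of_ne huv, Function.update_of_ne hwv]
              exact hf'prop u (mem_erase.mpr ⟨huv, hu⟩) w (mem_erase.mpr ⟨hwv, hw⟩) ha
      · push_neg at hB
        by_cases hC : ∃ v ∈ S, ∃ u ∈ S, adj v u ∧ ¬ (L v ⊆ L u)
        · obtain ⟨v, hv, u, hu, hadj, hns⟩ := hC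
          obtain ⟨c, hcL, hcU⟩ := not_subset.mp hns
          refine step v hv c hcL (fun w hw _ => hall2 w hw) ?_
          have huf : u ∈ S.filter (adj v) := mem_filter.mpr ⟨hu, hadj⟩
          have hsubF : S.filter (fun w => adj v w ∧ c ∈ L w) ⊆ (S.filter (adj v)).erase u := by
            intro w hw
            rw [mem_filter] at hw
            refine mem_erase.mpr ⟨?_, mem_filter.mpr ⟨hw.1, hw.2.1⟩⟩
            rintro rfl; exact hcU hw.2.2
          calc (S.filter (fun w => adj v w ∧ c ∈ L w)).card
              ≤ ((S.filter (adj v)).erase u).card := card_le_card hsubF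
            _ = (S.filter (adj v)).card - 1 := card_erase_of_mem huf
            _ ≤ 1 := by have := hdeg v hv; omega
        · push_neg at hC
          -- all adjacent lists equal; use the bipartition
          refine ⟨fun v => if h : v ∈ S then
              (if b v then (L v).min' (card_pos.mp (by have := hlist v h; omega))
               else (L v).max' (card_pos.mp (by have := hlist v h; omega))) else ⟨0, hK⟩,
            ?_, ?_⟩
          · intro w hw
            dsimp only
            rw [dif_pos hw]
            split
            · exact min'_mem _ _
            · exact max'_mem _ _
          · intro x hx y hy ha
            have hLeq : L y = L x :=
              Subset.antisymm (hC y hy x hx (hsym _ _ ha)) (hC x hx y hy ha)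
            have hc2 : 1 < (L x).card := hall2 x hx
            have hc2y : 1 < (L y).card := hall2 y hy
            have hbxy : b x ≠ b y := hb x hx y hy ha
            have hlt : ∀ (h₁ h₂), (L x).min' h₁ < (L x).max' h₂ := by
              intro h₁ h₂
              exact min'_lt_max'_of_card _ hc2
            have hminyx : ∀ (h₁ h₂), (L y).min' h₁ = (L x).min' h₂ := by
              intro h₁ h₂
              exact min'_congr_aux hLeq h₁ h₂
            have hmaxyx : ∀ (h₁ h₂), (L y).max' h₁ = (L x).max' h₂ := by
              intro h₁ h₂
              exact max'_congr_aux hLeq h₁ h₂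
            dsimp only
            rw [dif_pos hx, dif_pos hy]
            cases hbx : b x <;> cases hby : b y <;>
              simp only [hbx, hby, Bool.false_eq_true, Bool.true_eq_false,
                if_true, if_false] at hbxy ⊢
            · exact absurd rfl hbxy
            · -- f x = max' (L x), f y = min' (L y)
              intro heq
              rw [hminyx _ (card_pos.mp (by omega : 0 < (L x).card))] at heq
              exact (ne_of_lt (hlt _ _)).symm heq
            · -- f x = min' (L x), f y = max' (L y)
              intro heq
              rw [hmaxyx _ (card_pos.mp (by omega : 0 < (L x).card))] at heq
              exact (ne_of_lt (hlt _ _)) heq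
            · exact absurd rfl hbxy

/-- If `χ(G) ≤ 4` (there is a proper 4-coloring) and `χ'(G) = Δ(G)`
(there is a proper edge-coloring with `Δ(G)` colors), then the total chromatic number
satisfies `χ''(G) ≤ Δ(G) + 2`: there is a total coloring with `Δ(G) + 2` colors. -/
theorem stmt_4 {V : Type*} [Fintype V] [DecidableEq V]
    (G : SimpleGraph V) [DecidableRel G.Adj]
    (hχ : ∃ c : V → Fin 4, ∀ ⦃u v⦄, G.Adj u v → c u ≠ c v)
    (hχ' : ∃ c : G.edgeSet → Fin G.maxDegree, ∀ e f : G.edgeSet, e ≠ f →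
      (∃ v : V, v ∈ e.val ∧ v ∈ f.val) → c e ≠ c f) :
    ∃ (cv : V → Fin (G.maxDegree + 2)) (ce : G.edgeSet → Fin (G.maxDegree + 2)),
      (∀ ⦃u v⦄, G.Adj u v → cv u ≠ cv v) ∧
      (∀ e f : G.edgeSet, e ≠ f → (∃ v : V, v ∈ e.val ∧ v ∈ f.val) → ce e ≠ ce f) ∧
      (∀ (e : G.edgeSet) (v : V), v ∈ e.val → ce e ≠ cv v) := by
  classical
  set N := G.maxDegree with hN
  obtain ⟨c, hc⟩ := hχ
  obtain ⟨φ, hφ⟩ := hχ'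
  have hend : ∀ e : G.edgeSet, ∃ u v : V, G.Adj u v ∧ (e : Sym2 V) = s(u, v) := by
    rintro ⟨z, hz⟩
    induction z using Sym2.ind with
    | _ x y => exact ⟨x, y, G.mem_edgeSet.mp hz, rfl⟩
  rcases Nat.lt_or_ge N 2 with hN2 | hN2
  · have hN01 : N = 0 ∨ N = 1 := by omega
    rcases hN01 with h0 | h1
    · -- no edges at all
      have noedge : ∀ _e : G.edgeSet, False := by
        intro e
        obtain ⟨u, v, hadj, _⟩ := hend e
        have hp : 0 < G.degree u := G.degree_pos_iff_exists_adj u |>.mpr ⟨v, hadj⟩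
        have hq := G.degree_le_maxDegree u
        omega
      have noadj : ∀ u v, ¬ G.Adj u v :=
        fun u v h => noedge ⟨s(u, v), G.mem_edgeSet.mpr h⟩
      exact ⟨fun _ => ⟨0, by omega⟩, fun e => (noedge e).elim,
        fun u v h => absurd h (noadj u v),
        fun e _ _ _ => (noedge e).elim,
        fun e _ _ => (noedge e).elim⟩
    · -- G is a matching
      have hdle : ∀ v, G.degree v ≤ 1 := by
        intro v; have := G.degree_le_maxDegree v; omega
      have huniq : ∀ w x y, G.Adj w x → G.Adj w y → x = y := by
        intro w x y hx hy
        have h1 : x ∈ G.neighborFinset w := (G.mem_neighborFinset w x).mpr hx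
        have h2 : y ∈ G.neighborFinset w := (G.mem_neighborFinset w y).mpr hy
        have h3 : (G.neighborFinset w).card ≤ 1 := by
          rw [G.card_neighborFinset_eq_degree]; exact hdle w
        exact card_le_one.mp h3 _ h1 _ h2
      set rank := Fintype.equivFin V with hrank
      set b : V → Bool := fun v => decide (∃ u, G.Adj v u ∧ rank u < rank v) with hbdef
      have hbadj : ∀ u v, G.Adj u v → b u ≠ b v := by
        intro u v h
        have hne : rank u ≠ rank v := fun he => G.ne_of_adj h (rank.injective he)
        have hu : b u = decide (rank v < rank u) := by
          simp only [hbdef, decide_eq_decide]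
          constructor
          · rintro ⟨w, hw, hlt⟩; rwa [huniq u w v hw h] at hlt
          · exact fun hlt => ⟨v, h, hlt⟩
        have hv : b v = decide (rank u < rank v) := by
          simp only [hbdef, decide_eq_decide]
          constructor
          · rintro ⟨w, hw, hlt⟩; rwa [huniq v w u hw h.symm] at hlt
          · exact fun hlt => ⟨u, h.symm, hlt⟩
        rcases lt_trichotomy (rank u) (rank v) with hlt | heq | hlt
        · rw [hu, hv, decide_eq_false (asymm hlt), decide_eq_true hlt]
          decide
        · exact absurd heq hne
        · rw [hu, hv, decide_eq_true hlt, decide_eq_false (asymm hlt)]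
          decide
      refine ⟨fun v => if b v then ⟨1, by omega⟩ else ⟨2, by omega⟩,
        fun _ => ⟨0, by omega⟩, ?_, ?_, ?_⟩
      · intro u v h hcv
        have hb' := hbadj u v h
        cases hbu : b u <;> cases hbv : b v <;>
          simp only [hbu, hbv, if_true, if_false, Bool.false_eq_true, Bool.true_eq_false,
            Fin.mk.injEq] at hcv <;> first | exact hb' (hbu.trans hbv.symm) | omega
      · rintro e f hne ⟨v, hv1, hv2⟩
        exfalso
        obtain ⟨y, hy⟩ := Sym2.mem_iff_exists.mp hv1
        obtain ⟨z, hz⟩ := Sym2.mem_iff_exists.mp hv2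
        have hadjy : G.Adj v y := G.mem_edgeSet.mp (hy ▸ e.2)
        have hadjz : G.Adj v z := G.mem_edgeSet.mp (hz ▸ f.2)
        have hyz : y = z := huniq v y z hadjy hadjz
        exact hne (Subtype.ext (hy.trans (by rw [hyz, ← hz])))
      · intro e v _ heq
        cases hbv : b v <;>
          simp only [hbv, if_true, if_false, Bool.false_eq_true, Bool.true_eq_false,
            Fin.mk.injEq] at heq <;> omega
  · -- main case : N ≥ 2
    set col0 : Fin N := ⟨0, by omega⟩ with hcol0
    set col1 : Fin N := ⟨1, by omega⟩ with hcol1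
    have hcol01 : col0 ≠ col1 := by
      rw [hcol0, hcol1]
      exact Fin.ne_of_val_ne (by norm_num)
    set vc : Fin 4 → Fin (N + 2) :=
      ![⟨0, by omega⟩, ⟨1, by omega⟩, ⟨N, by omega⟩, ⟨N + 1, by omega⟩] with hvc
    have hvcval : ∀ i, (vc i).val = 0 ∨ (vc i).val = 1 ∨ (vc i).val = N ∨ (vc i).val = N + 1 := by
      intro i; fin_cases i <;> simp [hvc]
    have hvcinj : ∀ i j, vc i = vc j → i = j := by
      intro i j hij
      have hij' := congrArg Fin.val hij
      fin_cases i <;> fin_cases j <;> revert hij' <;>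
        simp [hvc] <;> omega
    set fourset : Finset (Fin (N + 2)) :=
      {⟨0, by omega⟩, ⟨1, by omega⟩, ⟨N, by omega⟩, ⟨N + 1, by omega⟩} with hfourset
    have hfourcard : fourset.card = 4 := by
      rw [hfourset]
      rw [card_insert_of_notMem (by simp only [mem_insert, mem_singleton, Fin.mk.injEq]; omega),
          card_insert_of_notMem (by simp only [mem_insert, mem_singleton, Fin.mk.injEq]; omega),
          card_insert_of_notMem (by simp only [mem_singleton, Fin.mk.injEq]; omega), card_singleton]
    have hfourval : ∀ x ∈ fourset, x.val = 0 ∨ x.val = 1 ∨ x.val = N ∨ x.val = N + 1 := by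
      intro x hx
      simp only [hfourset, mem_insert, mem_singleton] at hx
      rcases hx with rfl | rfl | rfl | rfl <;> simp
    have hvcmem : ∀ i, vc i ∈ fourset := by
      intro i
      fin_cases i <;> simp [hvc, hfourset]
    set cvf : V → Fin (N + 2) := fun v => vc (c v) with hcvf
    have hcvne : ∀ ⦃u v⦄, G.Adj u v → cvf u ≠ cvf v := by
      intro u v h hcontra
      simp only [hcvf] at hcontra
      exact hc h (hvcinj _ _ hcontra)
    have hsymE : ∀ e f : G.edgeSet, (fun e f : G.edgeSet => e ≠ f ∧ ∃ v, v ∈ e.val ∧ v ∈ f.val) e f →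
        (fun e f : G.edgeSet => e ≠ f ∧ ∃ v, v ∈ e.val ∧ v ∈ f.val) f e := by
      rintro e f ⟨hne, v, h1, h2⟩; exact ⟨hne.symm, v, h2, h1⟩
    have hirrE : ∀ e : G.edgeSet, ¬ (fun e f : G.edgeSet => e ≠ f ∧ ∃ v, v ∈ e.val ∧ v ∈ f.val) e e := by
      rintro e ⟨hne, _⟩; exact hne rfl
    obtain ⟨bE, hbE⟩ : ∃ bE : G.edgeSet → Bool, bE = fun e => decide (φ e = col0) := ⟨_, rfl⟩
    obtain ⟨S, hSdef⟩ : ∃ S : Finset G.edgeSet,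
      S = univ.filter (fun e => φ e = col0 ∨ φ e = col1) := ⟨_, rfl⟩
    obtain ⟨L, hLdef⟩ : ∃ L : G.edgeSet → Finset (Fin (N + 2)),
      L = fun e : G.edgeSet => fourset.filter (fun x => ∀ w ∈ e.val, x ≠ cvf w) := ⟨_, rfl⟩
    have hLcard : ∀ e : G.edgeSet, (L e).card = 2 := by
      intro e
      obtain ⟨u, v, hadj, huv⟩ := hend e
      have hcne : cvf u ≠ cvf v := hcvne hadj
      have hLe : L e = fourset \ {cvf u, cvf v} := by
        ext x
        simp only [hLdef, mem_filter, mem_sdiff, mem_insert, mem_singleton, huv, Sym2.mem_iff]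
        constructor
        · rintro ⟨h1, h2⟩
          exact ⟨h1, by push_neg; exact ⟨h2 u (Or.inl rfl), h2 v (Or.inr rfl)⟩⟩
        · rintro ⟨h1, h2⟩
          push_neg at h2
          exact ⟨h1, by rintro w (rfl | rfl); exacts [h2.1, h2.2]⟩
      rw [hLe, card_sdiff_of_subset]
      · rw [hfourcard, card_insert_of_notMem (by simp [hcne]), card_singleton]
      · intro x hx
        rcases mem_insert.mp hx with rfl | hx'
        · exact hvcmem _
        · rw [mem_singleton.mp hx']; exact hvcmem _
    have hφS : ∀ e ∈ S, φ e = col0 ∨ φ e = col1 := by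
      intro e he; rw [hSdef] at he; exact (mem_filter.mp he).2
    have hnotS : ∀ e : G.edgeSet, e ∉ S → 2 ≤ (φ e).val ∧ (φ e).val < N := by
      intro e he
      simp only [hSdef, mem_filter, mem_univ, true_and, not_or] at he
      have hlt := (φ e).isLt
      have h0 : (φ e).val ≠ 0 := fun h => he.1 (Fin.ext h)
      have h1 : (φ e).val ≠ 1 := fun h => he.2 (Fin.ext h)
      omega
    -- hypotheses for the list coloring lemma
    have hbS : ∀ e ∈ S, ∀ f ∈ S,
        (fun e f : G.edgeSet => e ≠ f ∧ ∃ v, v ∈ e.val ∧ v ∈ f.val) e f → bE e ≠ bE f := by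
      rintro e he f hf ⟨hne, w, hwe, hwf⟩
      have hpf : φ e ≠ φ f := hφ e f hne ⟨w, hwe, hwf⟩
      rcases hφS e he with h1 | h1 <;> rcases hφS f hf with h2 | h2
      · exact absurd (h1.trans h2.symm) hpf
      · simp only [hbE]
        rw [decide_eq_true h1, decide_eq_false (by rw [h2]; exact fun hh => hcol01 hh.symm)]
        decide
      · simp only [hbE]
        rw [decide_eq_false (by rw [h1]; exact fun hh => hcol01 hh.symm), decide_eq_true h2]
        decide
      · exact absurd (h1.trans h2.symm) hpf
    have hdegS : ∀ e ∈ S,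
        (S.filter ((fun e f : G.edgeSet => e ≠ f ∧ ∃ v, v ∈ e.val ∧ v ∈ f.val) e)).card ≤ 2 := by
      intro e heS
      obtain ⟨u, v, hadj, huv⟩ := hend e
      have hshare : ∀ f ∈ S.filter (fun f : G.edgeSet => e ≠ f ∧ ∃ v, v ∈ e.val ∧ v ∈ f.val),
          (if u ∈ (f : Sym2 V) then u else v) ∈ (f : Sym2 V) := by
        intro f hf
        rcases (mem_filter.mp hf).2 with ⟨hne, w, hwe, hwf⟩
        split_ifs with h
        · exact h
        · rw [huv] at hwe
          rcases Sym2.mem_iff.mp hwe with rfl | rfl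
          · exact absurd hwf h
          · exact hwf
      have hcolf : ∀ f ∈ S.filter (fun f : G.edgeSet => e ≠ f ∧ ∃ v, v ∈ e.val ∧ v ∈ f.val),
          φ f ≠ φ e := by
        intro f hf
        rcases (mem_filter.mp hf).2 with ⟨hne, w, hwe, hwf⟩
        exact hφ f e (Ne.symm hne) ⟨w, hwf, hwe⟩
      have hsame : ∀ f1 ∈ S.filter (fun f : G.edgeSet => e ≠ f ∧ ∃ v, v ∈ e.val ∧ v ∈ f.val),
          ∀ f2 ∈ S.filter (fun f : G.edgeSet => e ≠ f ∧ ∃ v, v ∈ e.val ∧ v ∈ f.val),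
          φ f1 = φ f2 := by
        intro f1 hf1 f2 hf2
        have h1 := hφS f1 (mem_of_mem_filter f1 hf1)
        have h2 := hφS f2 (mem_of_mem_filter f2 hf2)
        have he' := hφS e heS
        rcases h1 with h1 | h1 <;> rcases h2 with h2 | h2 <;> rcases he' with he' | he'
        · exact h1.trans h2.symm
        · exact h1.trans h2.symm
        · exact absurd (h1.trans he'.symm) (hcolf f1 hf1)
        · exact absurd (h2.trans he'.symm) (hcolf f2 hf2)
        · exact absurd (h2.trans he'.symm) (hcolf f2 hf2)
        · exact absurd (h1.trans he'.symm) (hcolf f1 hf1)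
        · exact h1.trans h2.symm
        · exact h1.trans h2.symm
      have hinj : Set.InjOn (fun f : G.edgeSet => if u ∈ (f : Sym2 V) then u else v)
          (S.filter (fun f : G.edgeSet => e ≠ f ∧ ∃ v, v ∈ e.val ∧ v ∈ f.val)) := by
        intro f1 hf1 f2 hf2 heq
        by_contra hne
        have heq' : (if u ∈ (f1 : Sym2 V) then u else v) = (if u ∈ (f2 : Sym2 V) then u else v) := heq
        have hw1 := hshare f1 hf1
        have hw2 := hshare f2 hf2
        rw [heq'] at hw1
        exact hφ f1 f2 hne ⟨_, hw1, hw2⟩ (hsame f1 hf1 f2 hf2)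
      have hmaps : ∀ f ∈ S.filter (fun f : G.edgeSet => e ≠ f ∧ ∃ v, v ∈ e.val ∧ v ∈ f.val),
          (if u ∈ (f : Sym2 V) then u else v) ∈ ({u, v} : Finset V) := by
        intro f _; split_ifs <;> simp
      calc (S.filter (fun f : G.edgeSet => e ≠ f ∧ ∃ v, v ∈ e.val ∧ v ∈ f.val)).card
          ≤ ({u, v} : Finset V).card := card_le_card_of_injOn _ hmaps hinj
        _ ≤ 2 := le_trans (card_insert_le _ _) (by simp)
    obtain ⟨ψ, hψmem, hψprop⟩ :=
      two_list_color (K := N + 2) (by omega)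
        (fun e f : G.edgeSet => e ≠ f ∧ ∃ v, v ∈ e.val ∧ v ∈ f.val) hsymE hirrE bE S.card S le_rfl L
        hbS hdegS
        (fun e _ => by rw [hLcard e]; omega)
        (fun e _ h1 => by rw [hLcard e] at h1; omega)
        (fun e he f _ h1 _ => by rw [hLcard e] at h1; omega)
    -- assemble the total coloring
    refine ⟨cvf, fun e => if e ∈ S then ψ e else Fin.castLE (by omega) (φ e), hcvne, ?_, ?_⟩
    · rintro e f hne ⟨w, hwe, hwf⟩
      by_cases heS : e ∈ S <;> by_cases hfS : f ∈ S
      · simp only [if_pos heS, if_pos hfS]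
        exact hψprop e heS f hfS ⟨hne, w, hwe, hwf⟩
      · simp only [if_pos heS, if_neg hfS]
        intro heq
        have hm := hψmem e heS
        rw [hLdef] at hm
        have h1 : ψ e ∈ fourset := mem_of_mem_filter _ hm
        have h2 := hfourval _ h1
        have h3 := hnotS f hfS
        have h4 : (ψ e).val = (φ f).val := by rw [heq]; simp [Fin.coe_castLE]
        omega
      · simp only [if_neg heS, if_pos hfS]
        intro heq
        have hm := hψmem f hfS
        rw [hLdef] at hm
        have h1 : ψ f ∈ fourset := mem_of_mem_filter _ hm
        have h2 := hfourval _ h1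
        have h3 := hnotS e heS
        have h4 : (φ e).val = (ψ f).val := by rw [← heq]; simp [Fin.coe_castLE]
        omega
      · simp only [if_neg heS, if_neg hfS]
        intro heq
        refine hφ e f hne ⟨w, hwe, hwf⟩ (Fin.ext ?_)
        have := congrArg Fin.val heq
        simpa [Fin.coe_castLE] using this
    · intro e v hv
      by_cases heS : e ∈ S
      · simp only [if_pos heS]
        have hm := hψmem e heS
        rw [hLdef] at hm
        exact (mem_filter.mp hm).2 v hv
      · simp only [if_neg heS]
        intro heq
        have h2 := hnotS e heS
        have h1 := hvcval (c v)
        have h3 : (φ e).val = (vc (c v)).val := by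
          have := congrArg Fin.val heq
          simpa [Fin.coe_castLE, hcvf] using this
        omega
end

section
/- If G is a graph with minimum degree 2 and mad(G) < 3, then G has a vertex of degree 2 with a neighbor of degree at most 5. -/
/-- If `G` has minimum degree exactly 2 and `mad(G) < 3` (every nonempty
subgraph `H` satisfies `2|E(H)|/|V(H)| < 3`), then `G` has a vertex of degree 2 with a
neighbor of degree at most 5. -/
theorem stmt_11 {V : Type*} [Fintype V] [DecidableEq V] [Nonempty V]
    (G : SimpleGraph V) [DecidableRel G.Adj] (hδ : G.minDegree = 2)
    (hmad : ∀ H : G.Subgraph, H.verts.Nonempty →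
      (2 * H.edgeSet.ncard : ℚ) / (H.verts.ncard : ℚ) < 3) :
    ∃ v w : V, G.Adj v w ∧ G.degree v = 2 ∧ G.degree w ≤ 5 := by
  classical
  by_contra hcon
  push_neg at hcon
  -- hcon : ∀ v w, G.Adj v w → G.degree v = 2 → 5 < G.degree w
  set n := Fintype.card V with hn
  set m := G.edgeFinset.card with hm
  have hnpos : 0 < n := Fintype.card_pos
  -- edge bound from mad < 3
  have htop := hmad ⊤ (by simp [SimpleGraph.Subgraph.verts_top])
  have hlt : 2 * m < 3 * n := by
    rw [SimpleGraph.Subgraph.verts_top, SimpleGraph.Subgraph.edgeSet_top] at htop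
    rw [Set.ncard_univ, Nat.card_eq_fintype_card] at htop
    have hE : G.edgeSet.ncard = m := by
      rw [hm, SimpleGraph.edgeFinset, Set.ncard_eq_toFinset_card']
    rw [hE, div_lt_iff₀ (by exact_mod_cast hnpos)] at htop
    exact_mod_cast htop
  have hmin : ∀ v, 2 ≤ G.degree v := fun v => hδ ▸ G.minDegree_le_degree v
  set A := Finset.univ.filter (fun v => G.degree v = 2) with hA
  set B := Finset.univ.filter (fun v => ¬ G.degree v = 2) with hB
  set B6 := B.filter (fun v => 6 ≤ G.degree v) with hB6
  have hdeg : ∀ v, G.degree v = ∑ b, if G.Adj v b then 1 else 0 := by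
    intro v
    rw [← Finset.card_filter, SimpleGraph.degree, SimpleGraph.neighborFinset_eq_filter]
  -- key double counting
  have key : ∑ a ∈ A, G.degree a ≤ ∑ b ∈ B6, G.degree b := by
    calc ∑ a ∈ A, G.degree a
        = ∑ a ∈ A, ∑ b, (if G.Adj a b then 1 else 0) := by simp_rw [hdeg]
      _ = ∑ b, ∑ a ∈ A, (if G.Adj a b then 1 else 0) := Finset.sum_comm
      _ = ∑ b ∈ B6, ∑ a ∈ A, (if G.Adj a b then 1 else 0) := by
          refine (Finset.sum_subset (Finset.subset_univ _) ?_).symm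
          intro b _ hb
          refine Finset.sum_eq_zero fun a ha => ?_
          rw [if_neg]
          intro hadj
          have ha2 : G.degree a = 2 := (Finset.mem_filter.mp ha).2
          have h6 : 6 ≤ G.degree b := hcon a b hadj ha2
          exact hb (by simp [hB6, hB, Finset.mem_filter, h6]; omega)
      _ ≤ ∑ b ∈ B6, ∑ a, (if G.Adj a b then 1 else 0) := by
          refine Finset.sum_le_sum fun b _ => ?_
          exact Finset.sum_le_sum_of_subset (Finset.subset_univ A)
      _ = ∑ b ∈ B6, G.degree b := by
          refine Finset.sum_congr rfl fun b _ => ?_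
          rw [hdeg b]
          exact Finset.sum_congr rfl fun a _ => by simp [G.adj_comm]
  have hsumAll : ∑ v, G.degree v = 2 * m := G.sum_degrees_eq_twice_card_edges
  have hsplit : ∑ a ∈ A, G.degree a + ∑ b ∈ B, G.degree b = ∑ v, G.degree v :=
    Finset.sum_filter_add_sum_filter_not _ _ _
  have hB6sub : B6 ⊆ B := Finset.filter_subset _ _
  have hBsplit : ∑ b ∈ B \ B6, G.degree b + ∑ b ∈ B6, G.degree b = ∑ b ∈ B, G.degree b :=
    Finset.sum_sdiff hB6sub
  have hsumA : ∑ a ∈ A, G.degree a = 2 * A.card := by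
    rw [Finset.sum_congr rfl (fun a ha => (Finset.mem_filter.mp ha).2)]
    simp [Nat.mul_comm]
    rfl
  have hsumB6 : 6 * B6.card ≤ ∑ b ∈ B6, G.degree b := by
    rw [Nat.mul_comm]
    calc B6.card * 6 = ∑ _b ∈ B6, 6 := by simp
      _ ≤ ∑ b ∈ B6, G.degree b :=
        Finset.sum_le_sum fun b hb => (Finset.mem_filter.mp hb).2
  have hsumBd : 3 * (B \ B6).card ≤ ∑ b ∈ B \ B6, G.degree b := by
    rw [Nat.mul_comm]
    calc (B \ B6).card * 3 = ∑ _b ∈ B \ B6, 3 := by simp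
      _ ≤ ∑ b ∈ B \ B6, G.degree b := by
        refine Finset.sum_le_sum fun b hb => ?_
        have hb' := Finset.mem_filter.mp (Finset.mem_sdiff.mp hb).1
        have := hmin b
        omega
  have hcardsplit : A.card + B.card = n := by
    rw [hA, hB, Finset.card_filter_add_card_filter_not, hn, Finset.card_univ]
  have hBcard : (B \ B6).card + B6.card = B.card := Finset.card_sdiff_add_card_eq_card hB6sub
  omega
end

section
/- If G is a graph with Δ(G) = 3 and average degree strictly less than 36/13, then G contains a vertex of degree at most 1, or two adjacent 2-vertices, or a 3-vertex with at least two 2-neighbors, or two adjacent 3-vertices each having a 2-neighbor. -/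
open Finset

/-- Double counting edges between two vertex sets. -/
private lemma dc {V : Type*} [DecidableEq V] (G : SimpleGraph V) [DecidableRel G.Adj]
    (S T : Finset V) :
    ∑ v ∈ S, (T.filter (G.Adj v)).card = ∑ w ∈ T, (S.filter (fun v => G.Adj v w)).card := by
  simp_rw [Finset.card_filter]
  exact Finset.sum_comm

/-- If `G` has maximum degree 3 and average degree less than `36/13`, then
`G` contains a vertex of degree at most 1, or two adjacent 2-vertices, or a 3-vertex with at
least two 2-neighbors, or two adjacent 3-vertices each having a 2-neighbor. -/
theorem stmt_12 {V : Type*} [Fintype V] [DecidableEq V] [Nonempty V]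
    (G : SimpleGraph V) [DecidableRel G.Adj] (hΔ : G.maxDegree = 3)
    (havg : (2 * G.edgeFinset.card : ℚ) / (Fintype.card V : ℚ) < 36 / 13) :
    (∃ v : V, G.degree v ≤ 1) ∨
    (∃ v w : V, G.Adj v w ∧ G.degree v = 2 ∧ G.degree w = 2) ∨
    (∃ v : V, G.degree v = 3 ∧
      2 ≤ ((G.neighborFinset v).filter fun w => G.degree w = 2).card) ∨
    (∃ v w : V, G.Adj v w ∧ G.degree v = 3 ∧ G.degree w = 3 ∧
      (∃ a : V, G.Adj v a ∧ G.degree a = 2) ∧ (∃ b : V, G.Adj w b ∧ G.degree b = 2)) := by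
  by_contra hcon
  push_neg at hcon
  obtain ⟨h1, h2, h3, h4⟩ := hcon
  have hdeg3 : ∀ v : V, G.degree v ≤ 3 := fun v => hΔ ▸ G.degree_le_maxDegree v
  have hdeg : ∀ v : V, G.degree v = 2 ∨ G.degree v = 3 := by
    intro v; have := h1 v; have := hdeg3 v; omega
  set S2 := Finset.univ.filter (fun v : V => G.degree v = 2) with hS2
  set S3 := Finset.univ.filter (fun v : V => G.degree v = 3) with hS3
  set A := Finset.univ.filter (fun v : V => G.degree v = 3 ∧
      ((G.neighborFinset v).filter fun w => G.degree w = 2).card = 1) with hA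
  set B := Finset.univ.filter (fun v : V => G.degree v = 3 ∧
      ((G.neighborFinset v).filter fun w => G.degree w = 2).card = 0) with hB
  -- every neighbor of a 2-vertex is in A
  have hnbA : ∀ v w : V, G.degree v = 2 → G.Adj v w → w ∈ A := by
    intro v w hv2 hadj
    have hw3 : G.degree w = 3 := by
      have := h2 v w hadj hv2
      rcases hdeg w with h | h
      · exact absurd h this
      · exact h
    have hv_mem : v ∈ (G.neighborFinset w).filter (fun u => G.degree u = 2) := by
      simp [SimpleGraph.mem_neighborFinset, hadj.symm, hv2]
    have h1le : 1 ≤ ((G.neighborFinset w).filter fun u => G.degree u = 2).card :=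
      Finset.card_pos.mpr ⟨v, hv_mem⟩
    have h2lt := h3 w hw3
    simp only [hA, Finset.mem_filter, Finset.mem_univ, true_and]
    exact ⟨hw3, by omega⟩
  -- |A| = 2 |S2|  (double count S2–A edges)
  have count1 : ∀ v ∈ S2, (A.filter (G.Adj v)).card = 2 := by
    intro v hv
    have hv2 : G.degree v = 2 := by simpa [hS2] using hv
    have : A.filter (G.Adj v) = G.neighborFinset v := by
      ext w
      simp only [Finset.mem_filter, SimpleGraph.mem_neighborFinset]
      exact ⟨fun h => h.2, fun h => ⟨hnbA v w hv2 h, h⟩⟩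
    rw [this, G.card_neighborFinset_eq_degree, hv2]
  have count2 : ∀ w ∈ A, (S2.filter (fun v => G.Adj v w)).card = 1 := by
    intro w hw
    have hw' : G.degree w = 3 ∧
        ((G.neighborFinset w).filter fun u => G.degree u = 2).card = 1 := by
      simpa [hA] using hw
    have : S2.filter (fun v => G.Adj v w)
        = (G.neighborFinset w).filter (fun u => G.degree u = 2) := by
      ext v
      simp only [hS2, Finset.mem_filter, Finset.mem_univ, true_and,
        SimpleGraph.mem_neighborFinset]
      constructor
      · rintro ⟨hd, ha⟩; exact ⟨ha.symm, hd⟩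
      · rintro ⟨ha, hd⟩; exact ⟨hd, ha.symm⟩
    rw [this, hw'.2]
  have hAcard : 2 * S2.card = A.card := by
    have := dc G S2 A
    rw [Finset.sum_congr rfl count1, Finset.sum_congr rfl count2] at this
    simpa [mul_comm] using this
  -- each A-vertex has exactly two B-neighbors, each B-vertex at most three A-neighbors
  have count3 : ∀ w ∈ A, (B.filter (G.Adj w)).card = 2 := by
    intro w hw
    have hw' : G.degree w = 3 ∧
        ((G.neighborFinset w).filter fun u => G.degree u = 2).card = 1 := by
      simpa [hA] using hw
    obtain ⟨a, ha⟩ := Finset.card_eq_one.mp hw'.2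
    have haw : G.Adj w a ∧ G.degree a = 2 := by
      have : a ∈ (G.neighborFinset w).filter fun u => G.degree u = 2 := by
        rw [ha]; exact Finset.mem_singleton_self a
      simpa [SimpleGraph.mem_neighborFinset] using this
    have key : B.filter (G.Adj w)
        = G.neighborFinset w \ ((G.neighborFinset w).filter fun u => G.degree u = 2) := by
      ext u
      simp only [hB, Finset.mem_filter, Finset.mem_univ, true_and, Finset.mem_sdiff,
        SimpleGraph.mem_neighborFinset]
      constructor
      · rintro ⟨⟨hu3, _⟩, hadj⟩
        exact ⟨hadj, fun h => by omega⟩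
      · rintro ⟨hadj, hne⟩
        have hu3 : G.degree u = 3 := by
          rcases hdeg u with h | h
          · exact absurd ⟨hadj, h⟩ hne
          · exact h
        refine ⟨⟨hu3, ?_⟩, hadj⟩
        by_contra hcz
        have hpos : 0 < ((G.neighborFinset u).filter fun x => G.degree x = 2).card := by
          omega
        obtain ⟨b, hb⟩ := Finset.card_pos.mp hpos
        simp only [Finset.mem_filter, SimpleGraph.mem_neighborFinset] at hb
        exact h4 w u hadj hw'.1 hu3 ⟨a, haw.1, haw.2⟩ b hb.1 hb.2
    rw [key, Finset.card_sdiff_of_subset (Finset.filter_subset _ _), hw'.2,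
      G.card_neighborFinset_eq_degree, hw'.1]
  have count4 : ∀ b ∈ B, (A.filter (fun w => G.Adj w b)).card ≤ 3 := by
    intro b hb
    have hsub : A.filter (fun w => G.Adj w b) ⊆ G.neighborFinset b := by
      intro w hw
      simp only [Finset.mem_filter] at hw
      simp [SimpleGraph.mem_neighborFinset, hw.2.symm]
    calc (A.filter (fun w => G.Adj w b)).card ≤ (G.neighborFinset b).card :=
          Finset.card_le_card hsub
      _ = G.degree b := G.card_neighborFinset_eq_degree b
      _ ≤ 3 := hdeg3 b
  have hAB : 2 * A.card ≤ 3 * B.card := by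
    have hdc := dc G A B
    have hl : ∑ w ∈ A, (B.filter (G.Adj w)).card = 2 * A.card := by
      rw [Finset.sum_congr rfl count3]; simp [mul_comm]
    have hr : ∑ b ∈ B, (A.filter (fun w => G.Adj w b)).card ≤ 3 * B.card := by
      calc ∑ b ∈ B, (A.filter (fun w => G.Adj w b)).card ≤ ∑ _b ∈ B, 3 :=
            Finset.sum_le_sum count4
        _ = 3 * B.card := by simp [mul_comm]
    omega
  -- A and B are disjoint subsets of S3
  have hABS3 : A.card + B.card ≤ S3.card := by
    have hdisj : Disjoint A B := by
      rw [Finset.disjoint_left]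
      intro x hxA hxB
      simp only [hA, Finset.mem_filter] at hxA
      simp only [hB, Finset.mem_filter] at hxB
      omega
    have hsub : A ∪ B ⊆ S3 := by
      intro x hx
      rcases Finset.mem_union.mp hx with h | h
      · simp only [hA, Finset.mem_filter] at h
        simp [hS3, h.2.1]
      · simp only [hB, Finset.mem_filter] at h
        simp [hS3, h.2.1]
    calc A.card + B.card = (A ∪ B).card := (Finset.card_union_of_disjoint hdisj).symm
      _ ≤ S3.card := Finset.card_le_card hsub
  -- degree sum
  have hpart : Finset.univ.filter (fun v : V => ¬ G.degree v = 2) = S3 := by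
    ext v
    simp only [Finset.mem_filter, Finset.mem_univ, true_and, hS3]
    have := hdeg v; constructor <;> intro h <;> omega
  have hsum : ∑ v : V, G.degree v = 2 * S2.card + 3 * S3.card := by
    rw [← Finset.sum_filter_add_sum_filter_not Finset.univ (fun v => G.degree v = 2), hpart]
    have e1 : ∑ v ∈ S2, G.degree v = 2 * S2.card := by
      rw [Finset.sum_congr rfl (fun v hv => by simpa [hS2] using hv)]
      simp [mul_comm]
    have e2 : ∑ v ∈ S3, G.degree v = 3 * S3.card := by
      rw [Finset.sum_congr rfl (fun v hv => by simpa [hS3] using hv)]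
      simp [mul_comm]
    rw [e1, e2]
  have hE : ∑ v : V, G.degree v = 2 * G.edgeFinset.card :=
    SimpleGraph.sum_degrees_eq_twice_card_edges G
  have hn : Fintype.card V = S2.card + S3.card := by
    rw [← Finset.card_univ, ← Finset.card_filter_add_card_filter_not
      (p := fun v => G.degree v = 2), hpart]
  -- arithmetic from the average degree bound
  have hnpos : (0 : ℚ) < (Fintype.card V : ℚ) := by
    exact_mod_cast Fintype.card_pos
  rw [div_lt_div_iff₀ hnpos (by norm_num)] at havg
  have hq : (2 * G.edgeFinset.card) * 13 < 36 * Fintype.card V := by exact_mod_cast havg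
  omega
end

section
/- Every forest admits a star 3-coloring: a proper coloring with 3 colors in which no path on 4 vertices is 2-colored. -/
/-- A star coloring with `k` colors: a proper coloring in which no path on 4 (distinct)
vertices receives only 2 colors. -/
def IsStarColoring {V : Type*} (G : SimpleGraph V) {k : ℕ} (c : V → Fin k) : Prop :=
  (∀ ⦃u v⦄, G.Adj u v → c u ≠ c v) ∧
  ∀ p₁ p₂ p₃ p₄ : V, G.Adj p₁ p₂ → G.Adj p₂ p₃ → G.Adj p₃ p₄ →
    p₁ ≠ p₂ → p₁ ≠ p₃ → p₁ ≠ p₄ → p₂ ≠ p₃ → p₂ ≠ p₄ → p₃ ≠ p₄ →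
    ¬ (({c p₁, c p₂, c p₃, c p₄} : Finset (Fin k)).card ≤ 2)

section Aux

open SimpleGraph

variable {V : Type*} [DecidableEq V] {G : SimpleGraph V}

/-- In an acyclic graph, every path realizes the distance between its endpoints. -/
lemma acyclic_path_length_eq_dist (hG : G.IsAcyclic) {u r : V} (p : G.Walk u r)
    (hp : p.IsPath) : p.length = G.dist u r := by
  have hr : G.Reachable u r := ⟨p⟩
  obtain ⟨q, hq, hql⟩ := hr.exists_path_of_dist
  have := (isAcyclic_iff_path_unique.mp hG) (⟨p, hp⟩ : G.Path u r) ⟨q, hq⟩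
  have : p = q := congrArg Subtype.val this
  rw [this, hql]

/-- In an acyclic graph, distances to a common root of adjacent vertices differ by one. -/
lemma acyclic_adj_dist (hG : G.IsAcyclic) {u v r : V} (h : G.Adj u v)
    (hur : G.Reachable u r) :
    G.dist v r = G.dist u r + 1 ∨ G.dist v r + 1 = G.dist u r := by
  obtain ⟨p, hp, hpl⟩ := hur.exists_path_of_dist
  by_cases hv : v ∈ p.support
  · right
    have hsplit := p.take_spec hv
    have hdrop : (p.dropUntil v hv).length = G.dist v r :=
      acyclic_path_length_eq_dist hG _ (hp.dropUntil hv)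
    have hlen : (p.takeUntil v hv).length + (p.dropUntil v hv).length = p.length := by
      rw [← SimpleGraph.Walk.length_append, hsplit]
    have htake : 1 ≤ (p.takeUntil v hv).length := by
      by_contra hle
      push_neg at hle
      interval_cases hl : (p.takeUntil v hv).length
      · have := SimpleGraph.Walk.eq_of_length_eq_zero hl
        exact h.ne this
    -- dist v r ≤ dist u r - 1 ; also dist u r ≤ dist v r + 1
    have h1 : G.dist v r + 1 ≤ G.dist u r := by omega
    have h2 : G.dist u r ≤ G.dist v r + 1 := by
      obtain ⟨q, hq, hql⟩ := SimpleGraph.Reachable.exists_path_of_dist (⟨p.dropUntil v hv⟩ : G.Reachable v r)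
      have := G.dist_le (SimpleGraph.Walk.cons h q)
      simpa [hql] using this
    omega
  · left
    have hcons : (SimpleGraph.Walk.cons (h.symm) p).IsPath :=
      (SimpleGraph.Walk.cons_isPath_iff _ _).mpr ⟨hp, hv⟩
    have := acyclic_path_length_eq_dist hG _ hcons
    simp only [SimpleGraph.Walk.length_cons, hpl] at this
    omega

/-- In an acyclic graph, each vertex has at most one neighbor closer to the root. -/
lemma acyclic_unique_parent (hG : G.IsAcyclic) {v u w r : V} (hu : G.Adj v u)
    (hw : G.Adj v w) (hur : G.dist u r + 1 = G.dist v r)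
    (hwr : G.dist w r + 1 = G.dist v r) (hvr : G.Reachable v r) : u = w := by
  have hru : G.Reachable u r := (hu.symm.reachable).trans hvr
  have hrw : G.Reachable w r := (hw.symm.reachable).trans hvr
  obtain ⟨pu, hpu, hpul⟩ := hru.exists_path_of_dist
  obtain ⟨pw, hpw, hpwl⟩ := hrw.exists_path_of_dist
  have hvu : v ∉ pu.support := by
    intro hv
    have := acyclic_path_length_eq_dist hG _ (hpu.dropUntil hv)
    have hle := SimpleGraph.Walk.length_dropUntil_le pu hv
    omega
  have hvw : v ∉ pw.support := by
    intro hv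
    have := acyclic_path_length_eq_dist hG _ (hpw.dropUntil hv)
    have hle := SimpleGraph.Walk.length_dropUntil_le pw hv
    omega
  have hcu : (SimpleGraph.Walk.cons hu pu).IsPath :=
    (SimpleGraph.Walk.cons_isPath_iff _ _).mpr ⟨hpu, hvu⟩
  have hcw : (SimpleGraph.Walk.cons hw pw).IsPath :=
    (SimpleGraph.Walk.cons_isPath_iff _ _).mpr ⟨hpw, hvw⟩
  have heq := (isAcyclic_iff_path_unique.mp hG)
    (⟨SimpleGraph.Walk.cons hu pu, hcu⟩ : G.Path v r) ⟨SimpleGraph.Walk.cons hw pw, hcw⟩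
  have heq' : SimpleGraph.Walk.cons hu pu = SimpleGraph.Walk.cons hw pw :=
    congrArg Subtype.val heq
  have := congrArg (fun q => q.getVert 1) heq'
  simpa using this

end Aux

/-- Every forest admits a star coloring with 3 colors. -/
theorem stmt_14 {V : Type*} [Fintype V] [DecidableEq V]
    (G : SimpleGraph V) (hG : G.IsAcyclic) :
    ∃ c : V → Fin 3, IsStarColoring G c := by
  classical
  -- root of each component
  set root : V → V := fun v => (G.connectedComponentMk v).out with hroot
  have hreach : ∀ v, G.Reachable v (root v) := by
    intro v
    apply SimpleGraph.ConnectedComponent.exact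
    simp [hroot, SimpleGraph.connectedComponentMk]
    rfl
  have hrootadj : ∀ {u v}, G.Adj u v → root u = root v := by
    intro u v h
    simp only [hroot]
    rw [SimpleGraph.ConnectedComponent.sound h.reachable]
  set f : V → ℕ := fun v => G.dist v (root v) with hf
  -- adjacent vertices have f differing by exactly 1
  have hadj : ∀ {u v}, G.Adj u v → f v = f u + 1 ∨ f v + 1 = f u := by
    intro u v h
    have h' := hrootadj h
    simp only [hf]
    rw [← h']
    exact acyclic_adj_dist hG h (hreach u)
  -- unique parent
  have hpar : ∀ {v u w}, G.Adj v u → G.Adj v w → f u + 1 = f v → f w + 1 = f v → u = w := by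
    intro v u w hu hw h1 h2
    simp only [hf] at h1 h2
    rw [← hrootadj hu] at h1
    rw [← hrootadj hw] at h2
    exact acyclic_unique_parent hG hu hw h1 h2 (hreach v)
  refine ⟨fun v => ⟨f v % 3, Nat.mod_lt _ (by norm_num)⟩, ?_, ?_⟩
  · intro u v h hc
    have := hadj h
    have hc' : f u % 3 = f v % 3 := congrArg Fin.val hc
    omega
  · intro p₁ p₂ p₃ p₄ h12 h23 h34 n12 n13 n14 n23 n24 n34 hcard
    -- step pattern analysis: no "up then down"
    have key : (f p₃ = f p₁ + 2 ∨ f p₃ + 2 = f p₁) ∨ (f p₄ = f p₂ + 2 ∨ f p₄ + 2 = f p₂) := by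
      rcases hadj h12 with h1 | h1
      · -- f p₂ = f p₁ + 1 : then f p₃ = f p₂ + 1 (else p₁ = p₃ by unique parent)
        rcases hadj h23 with h2 | h2
        · left; left; omega
        · exact absurd (hpar h12.symm h23 (by omega) (by omega)) n13
      · rcases hadj h23 with h2 | h2
        · -- f p₂ = f p₁ - 1, f p₃ = f p₂ + 1 : then f p₄ = f p₃ + 1 (else p₂ = p₄)
          rcases hadj h34 with h3 | h3
          · right; left; omega
          · exact absurd (hpar h23.symm h34 (by omega) (by omega)) n24
        · left; right; omega
    -- in either case, three colors among the four are pairwise distinct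
    set c : V → Fin 3 := fun v => (⟨f v % 3, Nat.mod_lt _ (by norm_num)⟩ : Fin 3) with hc
    have hne : ∀ a b : V, (f b = f a + 1 ∨ f b + 1 = f a ∨ f b = f a + 2 ∨ f b + 2 = f a) →
        c a ≠ c b := by
      intro a b hab h
      have := congrArg Fin.val h
      simp only [hc] at this
      omega
    have card3 : ∀ x y z : Fin 3, x ≠ y → x ≠ z → y ≠ z →
        ({x, y, z} : Finset (Fin 3)).card = 3 := by decide
    rcases key with h13 | h24
    · have hmid : f p₂ = f p₁ + 1 ∨ f p₂ + 1 = f p₁ := hadj h12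
      have h1 : c p₁ ≠ c p₂ := hne _ _ (by omega)
      have h2 : c p₁ ≠ c p₃ := hne _ _ (by omega)
      have h3 : c p₂ ≠ c p₃ := by
        have := hadj h23; exact hne _ _ (by omega)
      have hsub : ({c p₁, c p₂, c p₃} : Finset (Fin 3)) ⊆ {c p₁, c p₂, c p₃, c p₄} := by
        intro x hx; simp only [Finset.mem_insert, Finset.mem_singleton] at hx ⊢; tauto
      have := Finset.card_le_card hsub
      rw [card3 _ _ _ h1 h2 h3] at this
      omega
    · have hmid : f p₃ = f p₂ + 1 ∨ f p₃ + 1 = f p₂ := hadj h23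
      have h1 : c p₂ ≠ c p₃ := hne _ _ (by omega)
      have h2 : c p₂ ≠ c p₄ := hne _ _ (by omega)
      have h3 : c p₃ ≠ c p₄ := by
        have := hadj h34; exact hne _ _ (by omega)
      have hsub : ({c p₂, c p₃, c p₄} : Finset (Fin 3)) ⊆ {c p₁, c p₂, c p₃, c p₄} := by
        intro x hx; simp only [Finset.mem_insert, Finset.mem_singleton] at hx ⊢; tauto
      have := Finset.card_le_card hsub
      rw [card3 _ _ _ h1 h2 h3] at this
      omega
end

section
/- If a graph G has a partition of its vertex set into sets I and F such that I is 2-independent (any two vertices of I are at distance greater than 2 in G) and G[F] is a forest, then G has a star coloring with 4 colors. -/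
open SimpleGraph Walk

private lemma card3_aux {α : Type*} [DecidableEq α] {S : Finset α} {x y z : α}
    (hx : x ∈ S) (hy : y ∈ S) (hz : z ∈ S) (hxy : x ≠ y) (hxz : x ≠ z) (hyz : y ≠ z) :
    ¬ S.card ≤ 2 := by
  intro hS
  have hsub : ({x, y, z} : Finset α) ⊆ S := by
    intro a ha
    simp only [Finset.mem_insert, Finset.mem_singleton] at ha
    rcases ha with rfl | rfl | rfl <;> assumption
  have h3 : ({x, y, z} : Finset α).card = 3 := by
    rw [Finset.card_insert_of_notMem (by simp [hxy, hxz]),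
      Finset.card_insert_of_notMem (by simp [hyz]), Finset.card_singleton]
  have := Finset.card_le_card hsub
  omega

/-- In an acyclic graph, every path realizes the distance between its endpoints. -/
private lemma path_length_eq_dist {W : Type*} {H : SimpleGraph W} (hac : H.IsAcyclic)
    {u r : W} {p : H.Walk u r} (hp : p.IsPath) : p.length = H.dist u r := by
  obtain ⟨q, hq, hql⟩ := p.reachable.exists_path_of_dist
  have h1 : (⟨p, hp⟩ : H.Path u r) = ⟨q, hq⟩ := hac.path_unique _ _
  have h2 : p = q := congrArg Subtype.val h1
  rw [h2, hql]

/-- In an acyclic graph, distances to a fixed root differ by exactly one along an edge. -/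
private lemma adj_dist_aux {W : Type*} [DecidableEq W] {H : SimpleGraph W} (hac : H.IsAcyclic)
    {u v r : W} (h : H.Adj u v) (hr : H.Reachable v r) :
    H.dist u r = H.dist v r + 1 ∨ H.dist v r = H.dist u r + 1 := by
  obtain ⟨p, hp, hpl⟩ := hr.exists_path_of_dist
  by_cases hu : u ∈ p.support
  · right
    have htp : (p.takeUntil u hu).IsPath := hp.takeUntil hu
    have hdp : (p.dropUntil u hu).IsPath := hp.dropUntil hu
    have hsingle : (⟨p.takeUntil u hu, htp⟩ : H.Path v u) = Path.singleton h.symm :=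
      hac.path_unique _ _
    have hlen1 : (p.takeUntil u hu).length = 1 := by
      have := congrArg (fun q : H.Path v u => q.1.length) hsingle
      simpa [Path.singleton] using this
    have hspec := congrArg Walk.length (p.take_spec hu)
    rw [Walk.length_append, hlen1] at hspec
    have hd : (p.dropUntil u hu).length = H.dist u r := path_length_eq_dist hac hdp
    omega
  · left
    have hcons : (Walk.cons h p).IsPath := hp.cons hu
    have := path_length_eq_dist hac hcons
    simp only [Walk.length_cons, hpl] at this
    omega

/-- In an acyclic graph, a vertex has at most one neighbor closer to a fixed root. -/
private lemma parent_unique_aux {W : Type*} [DecidableEq W] {H : SimpleGraph W} (hac : H.IsAcyclic)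
    {x u w r : W} (h1 : H.Adj x u) (h2 : H.Adj x w) (hr : H.Reachable x r)
    (d1 : H.dist u r + 1 = H.dist x r) (d2 : H.dist w r + 1 = H.dist x r) : u = w := by
  have key : ∀ {y : W}, H.Adj x y → H.dist y r + 1 = H.dist x r →
      ∃ p : H.Walk y r, p.IsPath ∧ x ∉ p.support ∧ p.length = H.dist y r := by
    intro y hy hd
    have hry : H.Reachable y r := (hy.symm.reachable).trans hr
    obtain ⟨p, hp, hpl⟩ := hry.exists_path_of_dist
    refine ⟨p, hp, ?_, hpl⟩
    intro hx
    have hdp : (p.dropUntil x hx).IsPath := hp.dropUntil hx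
    have hd2 : (p.dropUntil x hx).length = H.dist x r := path_length_eq_dist hac hdp
    have hspec := congrArg Walk.length (p.take_spec hx)
    rw [Walk.length_append] at hspec
    have hne : y ≠ x := hy.ne'
    have hpos : (p.takeUntil x hx).length ≠ 0 := fun h0 => hne (Walk.eq_of_length_eq_zero h0)
    omega
  obtain ⟨pu, hpu, hxu, hplu⟩ := key h1 d1
  obtain ⟨pw, hpw, hxw, hplw⟩ := key h2 d2
  have hcu : (Walk.cons h1 pu).IsPath := hpu.cons hxu
  have hcw : (Walk.cons h2 pw).IsPath := hpw.cons hxw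
  have heq : (⟨Walk.cons h1 pu, hcu⟩ : H.Path x r) = ⟨Walk.cons h2 pw, hcw⟩ :=
    hac.path_unique _ _
  have heqw : Walk.cons h1 pu = Walk.cons h2 pw := congrArg Subtype.val heq
  have := congrArg (fun q : H.Walk x r => q.getVert 1) heqw
  simpa [Walk.getVert_cons_succ, Walk.getVert_zero] using this

set_option maxHeartbeats 1000000 in
/-- If `V(G)` has a partition into a 2-independent set `I` (any two distinct
vertices of `I` are at distance greater than 2: non-adjacent with no common neighbor) and a
set `F` inducing a forest, then `G` has a star coloring with 4 colors. -/
theorem stmt_15 {V : Type*} [Fintype V] [DecidableEq V] (G : SimpleGraph V)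
    (I F : Set V) (hdisj : Disjoint I F) (hcover : I ∪ F = Set.univ)
    (hI : ∀ u ∈ I, ∀ v ∈ I, u ≠ v →
      ¬ G.Adj u v ∧ ∀ w : V, ¬ (G.Adj u w ∧ G.Adj w v))
    (hF : (G.induce F).IsAcyclic) :
    ∃ c : V → Fin 4, IsStarColoring G c := by
  classical
  set H : SimpleGraph F := G.induce F with hH
  let root : F → F := fun v => (H.connectedComponentMk v).out
  let dep : F → ℕ := fun v => H.dist v (root v)
  have dep_eq : ∀ v : F, dep v = H.dist v (root v) := fun _ => rfl
  have hreach : ∀ v : F, H.Reachable v (root v) := fun v =>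
    (ConnectedComponent.eq.mp ((H.connectedComponentMk v).out_eq)).symm
  have hroot_adj : ∀ u v : F, H.Adj u v → root u = root v := fun u v huv =>
    congrArg Quot.out (ConnectedComponent.connectedComponentMk_eq_of_adj huv)
  let c : V → Fin 4 := fun v => if hv : v ∈ F then ⟨dep ⟨v, hv⟩ % 3, by omega⟩ else 3
  have hmem : ∀ v : V, v ∈ I ∨ v ∈ F := by
    intro v
    have : v ∈ I ∪ F := by rw [hcover]; trivial
    exact this
  have hnotF : ∀ v : V, v ∉ F → v ∈ I := fun v hv => (hmem v).resolve_right hv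
  have hcF : ∀ (v : V) (hv : v ∈ F), c v = ⟨dep ⟨v, hv⟩ % 3, by omega⟩ :=
    fun v hv => dif_pos hv
  have hcI : ∀ v : V, v ∉ F → c v = 3 := fun v hv => dif_neg hv
  have hcF3 : ∀ (v : V), v ∈ F → c v ≠ 3 := by
    intro v hv h
    rw [hcF v hv] at h
    have := congrArg Fin.val h
    norm_num at this
    omega
  have hadjH : ∀ (u v : V) (hu : u ∈ F) (hv : v ∈ F), G.Adj u v →
      H.Adj ⟨u, hu⟩ ⟨v, hv⟩ := fun u v hu hv h => h
  have hdep_adj : ∀ (u v : F), H.Adj u v →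
      H.dist u (root u) = H.dist v (root u) + 1 ∨
      H.dist v (root u) = H.dist u (root u) + 1 := by
    intro u v huv
    have hrv : H.Reachable v (root u) := by
      rw [hroot_adj u v huv]; exact hreach v
    exact adj_dist_aux hF huv hrv
  have hproper : ∀ ⦃u v : V⦄, G.Adj u v → c u ≠ c v := by
    intro u v huv
    by_cases hu : u ∈ F <;> by_cases hv : v ∈ F
    · have hadj := hadjH u v hu hv huv
      have hrt := hroot_adj _ _ hadj
      have e2 : dep ⟨v, hv⟩ = H.dist ⟨v, hv⟩ (root ⟨u, hu⟩) := by
        rw [dep_eq, hrt]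
      have e1 : dep ⟨u, hu⟩ = H.dist ⟨u, hu⟩ (root ⟨u, hu⟩) := dep_eq _
      rw [hcF u hu, hcF v hv]
      intro hcc
      have hval := congrArg Fin.val hcc
      simp only [e1, e2] at hval
      rcases hdep_adj ⟨u, hu⟩ ⟨v, hv⟩ hadj with h | h <;> omega
    · exact fun h => hcF3 u hu (h.trans (hcI v hv))
    · exact fun h => hcF3 v hv (h.symm.trans (hcI u hu))
    · exact absurd huv (hI u (hnotF u hu) v (hnotF v hv) (G.ne_of_adj huv)).1
  refine ⟨c, hproper, ?_⟩
  intro p₁ p₂ p₃ p₄ h12 h23 h34 n12 n13 n14 n23 n24 n34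
  have finish2 : ∀ w a b : V, w ∉ F → a ∈ F → b ∈ F → G.Adj a b →
      c w ∈ ({c p₁, c p₂, c p₃, c p₄} : Finset (Fin 4)) →
      c a ∈ ({c p₁, c p₂, c p₃, c p₄} : Finset (Fin 4)) →
      c b ∈ ({c p₁, c p₂, c p₃, c p₄} : Finset (Fin 4)) →
      ¬ (({c p₁, c p₂, c p₃, c p₄} : Finset (Fin 4)).card ≤ 2) := by
    intro w a b hw ha hb hab hmw hma hmb
    refine card3_aux hmw hma hmb ?_ ?_ (hproper hab)
    · rw [hcI w hw]; exact fun h => hcF3 a ha h.symm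
    · rw [hcI w hw]; exact fun h => hcF3 b hb h.symm
  by_cases h1F : p₁ ∈ F <;> by_cases h2F : p₂ ∈ F <;> by_cases h3F : p₃ ∈ F <;>
    by_cases h4F : p₄ ∈ F
  next =>
    have a12 : H.Adj ⟨p₁, h1F⟩ ⟨p₂, h2F⟩ := hadjH _ _ _ _ h12
    have a23 : H.Adj ⟨p₂, h2F⟩ ⟨p₃, h3F⟩ := hadjH _ _ _ _ h23
    have a34 : H.Adj ⟨p₃, h3F⟩ ⟨p₄, h4F⟩ := hadjH _ _ _ _ h34
    have r12 : root ⟨p₁, h1F⟩ = root ⟨p₂, h2F⟩ := hroot_adj _ _ a12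
    have r23 : root ⟨p₂, h2F⟩ = root ⟨p₃, h3F⟩ := hroot_adj _ _ a23
    have r34 : root ⟨p₃, h3F⟩ = root ⟨p₄, h4F⟩ := hroot_adj _ _ a34
    have hre2 : H.Reachable ⟨p₂, h2F⟩ (root ⟨p₁, h1F⟩) := by rw [r12]; exact hreach _
    have hre3 : H.Reachable ⟨p₃, h3F⟩ (root ⟨p₂, h2F⟩) := by rw [r23]; exact hreach _
    have hre4 : H.Reachable ⟨p₄, h4F⟩ (root ⟨p₃, h3F⟩) := by rw [r34]; exact hreach _
    have e2 : H.dist ⟨p₂, h2F⟩ (root ⟨p₁, h1F⟩) = dep ⟨p₂, h2F⟩ := by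
      rw [dep_eq, r12]
    have e3 : H.dist ⟨p₃, h3F⟩ (root ⟨p₂, h2F⟩) = dep ⟨p₃, h3F⟩ := by
      rw [dep_eq, r23]
    have e4 : H.dist ⟨p₄, h4F⟩ (root ⟨p₃, h3F⟩) = dep ⟨p₄, h4F⟩ := by
      rw [dep_eq, r34]
    have e1' : H.dist ⟨p₁, h1F⟩ (root ⟨p₂, h2F⟩) = dep ⟨p₁, h1F⟩ := by
      rw [← r12, dep_eq]
    have e2' : H.dist ⟨p₂, h2F⟩ (root ⟨p₃, h3F⟩) = dep ⟨p₂, h2F⟩ := by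
      rw [← r23, dep_eq]
    have s1 : dep ⟨p₁, h1F⟩ = dep ⟨p₂, h2F⟩ + 1 ∨ dep ⟨p₂, h2F⟩ = dep ⟨p₁, h1F⟩ + 1 := by
      have h := adj_dist_aux hF a12 hre2
      rwa [e2] at h
    have s2 : dep ⟨p₂, h2F⟩ = dep ⟨p₃, h3F⟩ + 1 ∨ dep ⟨p₃, h3F⟩ = dep ⟨p₂, h2F⟩ + 1 := by
      have h := adj_dist_aux hF a23 hre3
      rwa [e3] at h
    have s3 : dep ⟨p₃, h3F⟩ = dep ⟨p₄, h4F⟩ + 1 ∨ dep ⟨p₄, h4F⟩ = dep ⟨p₃, h3F⟩ + 1 := by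
      have h := adj_dist_aux hF a34 hre4
      rwa [e4] at h
    have hc1 : c p₁ = ⟨dep ⟨p₁, h1F⟩ % 3, by omega⟩ := hcF p₁ h1F
    have hc2 : c p₂ = ⟨dep ⟨p₂, h2F⟩ % 3, by omega⟩ := hcF p₂ h2F
    have hc3 : c p₃ = ⟨dep ⟨p₃, h3F⟩ % 3, by omega⟩ := hcF p₃ h3F
    have hc4 : c p₄ = ⟨dep ⟨p₄, h4F⟩ % 3, by omega⟩ := hcF p₄ h4F
    have no_peak2 : ¬ (dep ⟨p₂, h2F⟩ = dep ⟨p₁, h1F⟩ + 1 ∧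
        dep ⟨p₂, h2F⟩ = dep ⟨p₃, h3F⟩ + 1) := by
      rintro ⟨f1, f2⟩
      have : (⟨p₁, h1F⟩ : F) = ⟨p₃, h3F⟩ :=
        parent_unique_aux hF a12.symm a23 (hreach _)
          (by rw [e1', ← dep_eq]; omega) (by rw [e3, ← dep_eq]; omega)
      exact n13 (congrArg Subtype.val this)
    have no_peak3 : ¬ (dep ⟨p₃, h3F⟩ = dep ⟨p₂, h2F⟩ + 1 ∧
        dep ⟨p₃, h3F⟩ = dep ⟨p₄, h4F⟩ + 1) := by
      rintro ⟨f1, f2⟩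
      have : (⟨p₂, h2F⟩ : F) = ⟨p₄, h4F⟩ :=
        parent_unique_aux hF a23.symm a34 (hreach _)
          (by rw [e2', ← dep_eq]; omega) (by rw [e4, ← dep_eq]; omega)
      exact n24 (congrArg Subtype.val this)
    rcases s1 with f1 | f1 <;> rcases s2 with f2 | f2 <;> rcases s3 with f3 | f3
    · exact card3_aux (x := c p₁) (y := c p₂) (z := c p₃)
        (by simp) (by simp) (by simp)
        (by simp only [hc1, hc2, hc3, ne_eq, Fin.mk.injEq]; omega)
        (by simp only [hc1, hc2, hc3, ne_eq, Fin.mk.injEq]; omega)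
        (by simp only [hc1, hc2, hc3, ne_eq, Fin.mk.injEq]; omega)
    · exact card3_aux (x := c p₁) (y := c p₂) (z := c p₃)
        (by simp) (by simp) (by simp)
        (by simp only [hc1, hc2, hc3, ne_eq, Fin.mk.injEq]; omega)
        (by simp only [hc1, hc2, hc3, ne_eq, Fin.mk.injEq]; omega)
        (by simp only [hc1, hc2, hc3, ne_eq, Fin.mk.injEq]; omega)
    · exact absurd ⟨f2, f3⟩ no_peak3
    · exact card3_aux (x := c p₂) (y := c p₃) (z := c p₄)
        (by simp) (by simp) (by simp)
        (by simp only [hc2, hc3, hc4, ne_eq, Fin.mk.injEq]; omega)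
        (by simp only [hc2, hc3, hc4, ne_eq, Fin.mk.injEq]; omega)
        (by simp only [hc2, hc3, hc4, ne_eq, Fin.mk.injEq]; omega)
    · exact absurd ⟨f1, f2⟩ no_peak2
    · exact absurd ⟨f1, f2⟩ no_peak2
    · exact absurd ⟨f2, f3⟩ no_peak3
    · exact card3_aux (x := c p₁) (y := c p₂) (z := c p₃)
        (by simp) (by simp) (by simp)
        (by simp only [hc1, hc2, hc3, ne_eq, Fin.mk.injEq]; omega)
        (by simp only [hc1, hc2, hc3, ne_eq, Fin.mk.injEq]; omega)
        (by simp only [hc1, hc2, hc3, ne_eq, Fin.mk.injEq]; omega)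
  all_goals first
    | exact absurd h12 (hI p₁ (hnotF _ ‹_›) p₂ (hnotF _ ‹_›) n12).1
    | exact absurd h23 (hI p₂ (hnotF _ ‹_›) p₃ (hnotF _ ‹_›) n23).1
    | exact absurd h34 (hI p₃ (hnotF _ ‹_›) p₄ (hnotF _ ‹_›) n34).1
    | exact absurd ⟨h12, h23⟩ ((hI p₁ (hnotF _ ‹_›) p₃ (hnotF _ ‹_›) n13).2 p₂)
    | exact absurd ⟨h23, h34⟩ ((hI p₂ (hnotF _ ‹_›) p₄ (hnotF _ ‹_›) n24).2 p₃)
    | exact finish2 p₄ p₂ p₃ ‹_› ‹_› ‹_› h23 (by simp) (by simp) (by simp)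
    | exact finish2 p₃ p₁ p₂ ‹_› ‹_› ‹_› h12 (by simp) (by simp) (by simp)
    | exact finish2 p₂ p₃ p₄ ‹_› ‹_› ‹_› h34 (by simp) (by simp) (by simp)
    | exact finish2 p₁ p₂ p₃ ‹_› ‹_› ‹_› h23 (by simp) (by simp) (by simp)
end

section
/- For every positive integer k, the graph G_n obtained from the complete graph K_n by subdividing every edge once satisfies mad(G_n) = 4 - 8/(n+1), and if n > k² + k then G_n has no star coloring with k colors. -/
/-- The graph obtained from the complete graph `K_n` by subdividing every edge once: one
branch vertex for each vertex of `K_n`, and one degree-2 vertex for each edge of `K_n`,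
adjacent to the two endpoints of that edge. -/
def subdividedComplete (n : ℕ) :
    SimpleGraph (Fin n ⊕ {e : Sym2 (Fin n) // ¬ e.IsDiag}) :=
  SimpleGraph.fromRel fun x y =>
    match x, y with
    | Sum.inl u, Sum.inr e => u ∈ (e : Sym2 (Fin n))
    | _, _ => False

namespace Stmt17Aux

open Sum Finset SimpleGraph

abbrev SubV (n : ℕ) := {e : Sym2 (Fin n) // ¬ e.IsDiag}
abbrev Vt (n : ℕ) := Fin n ⊕ SubV n

variable {n : ℕ}

lemma adj_inl_inr {u : Fin n} {e : SubV n} :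
    (subdividedComplete n).Adj (inl u) (inr e) ↔ u ∈ e.val := by
  simp [subdividedComplete, SimpleGraph.fromRel_adj]

lemma not_adj_inl_inl {u v : Fin n} : ¬ (subdividedComplete n).Adj (inl u) (inl v) := by
  simp [subdividedComplete, SimpleGraph.fromRel_adj]

lemma not_adj_inr_inr {e f : SubV n} : ¬ (subdividedComplete n).Adj (inr e) (inr f) := by
  simp [subdividedComplete, SimpleGraph.fromRel_adj]

lemma edge_decomp {H : (subdividedComplete n).Subgraph} {s : Sym2 (Vt n)}
    (hs : s ∈ H.edgeSet) :
    ∃ u e, H.Adj (inl u) (inr e) ∧ s = s(inl u, inr e) := by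
  induction s using Sym2.ind with
  | _ x y =>
    have hadj : H.Adj x y := SimpleGraph.Subgraph.mem_edgeSet.1 hs
    have hG := hadj.adj_sub
    cases x with
    | inl u =>
      cases y with
      | inl v => exact absurd hG not_adj_inl_inl
      | inr e => exact ⟨u, e, hadj, rfl⟩
    | inr e =>
      cases y with
      | inl v => exact ⟨v, e, hadj.symm, Sym2.eq_swap⟩
      | inr f => exact absurd hG not_adj_inr_inr

lemma subV_rep (e : SubV n) : ∃ x y : Fin n, x ≠ y ∧ e.val = s(x, y) := by
  obtain ⟨⟨x, y⟩, hxy⟩ := Quot.exists_rep e.val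
  refine ⟨x, y, ?_, hxy.symm⟩
  intro h
  exact e.2 (by rw [← hxy, h]; exact Sym2.mk_isDiag_iff.2 rfl)

lemma other_ne {u : Fin n} {e : SubV n} (h : u ∈ e.val) : Sym2.Mem.other' h ≠ u := by
  intro heq
  apply e.2
  rw [← Sym2.other_spec' h, heq]
  exact Sym2.mk_isDiag_iff.2 rfl

open Classical in
/-- The finset of incidence pairs of a subgraph. -/
noncomputable def Pfin (H : (subdividedComplete n).Subgraph) : Finset (Fin n × SubV n) :=
  univ.filter fun p => H.Adj (inl p.1) (inr p.2)

lemma mem_Pfin {H : (subdividedComplete n).Subgraph} {p : Fin n × SubV n} :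
    p ∈ Pfin H ↔ H.Adj (inl p.1) (inr p.2) := by
  simp [Pfin]

lemma enc_injective :
    Function.Injective (fun p : Fin n × SubV n => s(inl p.1, (inr p.2 : Vt n))) := by
  intro p q h
  simp only [Sym2.eq_iff] at h
  rcases h with ⟨h1, h2⟩ | ⟨h1, h2⟩
  · exact Prod.ext (Sum.inl.inj h1) (Sum.inr.inj h2)
  · exact absurd h1 (by simp)

lemma card_edgeSet (H : (subdividedComplete n).Subgraph) :
    H.edgeSet.ncard = (Pfin H).card := by
  classical
  have hfin : H.edgeSet.Finite := Set.toFinite _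
  rw [Set.ncard_eq_toFinset_card _ hfin]
  have himg : hfin.toFinset = (Pfin H).image
      (fun p : Fin n × SubV n => s(inl p.1, (inr p.2 : Vt n))) := by
    ext s
    simp only [Set.Finite.mem_toFinset, mem_image]
    constructor
    · intro hs
      obtain ⟨u, e, hadj, rfl⟩ := edge_decomp hs
      exact ⟨(u, e), mem_Pfin.2 hadj, rfl⟩
    · rintro ⟨p, hp, rfl⟩
      exact SimpleGraph.Subgraph.mem_edgeSet.2 (mem_Pfin.1 hp)
  rw [himg, card_image_of_injective _ enc_injective]

open Classical in
noncomputable def Afin (H : (subdividedComplete n).Subgraph) : Finset (Vt n) :=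
  H.verts.toFinite.toFinset.filter (fun x => x.isLeft)

open Classical in
noncomputable def Bfin (H : (subdividedComplete n).Subgraph) : Finset (Vt n) :=
  H.verts.toFinite.toFinset.filter (fun x => x.isRight)

lemma verts_card_eq (H : (subdividedComplete n).Subgraph) :
    H.verts.ncard = (Afin H).card + (Bfin H).card := by
  classical
  rw [Set.ncard_eq_toFinset_card _ H.verts.toFinite]
  have : Bfin H = H.verts.toFinite.toFinset.filter (fun x => ¬ x.isLeft) := by
    apply Finset.filter_congr
    intro x _
    cases x <;> simp
  rw [Afin, this, Finset.card_filter_add_card_filter_not]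

lemma card_Pfin_le_right (H : (subdividedComplete n).Subgraph) :
    (Pfin H).card ≤ 2 * (Bfin H).card := by
  classical
  have h1 : (Pfin H).card ≤ 2 * ((Pfin H).image (fun p => (inr p.2 : Vt n))).card := by
    apply Finset.card_le_mul_card_image
    intro y hy
    obtain ⟨p, hp, rfl⟩ := mem_image.1 hy
    obtain ⟨x, y', hne, hxy⟩ := subV_rep p.2
    refine le_trans (Finset.card_le_card (t := {(x, p.2), (y', p.2)}) ?_) ?_
    · intro q hq
      rw [mem_filter] at hq
      obtain ⟨hq1, hq2⟩ := hq
      have hq2' : q.2 = p.2 := Sum.inr.inj hq2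
      have hmem : q.1 ∈ p.2.val := by
        have := adj_inl_inr.1 (mem_Pfin.1 hq1).adj_sub
        rwa [hq2'] at this
      rw [hxy, Sym2.mem_iff] at hmem
      rcases hmem with h | h
      · simp [Prod.ext_iff, h, hq2']
      · simp [Prod.ext_iff, h, hq2']
    · exact le_trans (Finset.card_insert_le _ _) (by simp)
  refine le_trans h1 (Nat.mul_le_mul_left 2 (Finset.card_le_card ?_))
  intro y hy
  obtain ⟨p, hp, rfl⟩ := mem_image.1 hy
  rw [Bfin, mem_filter, Set.Finite.mem_toFinset]
  exact ⟨(mem_Pfin.1 hp).snd_mem, rfl⟩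

lemma card_Pfin_le_left (H : (subdividedComplete n).Subgraph) :
    (Pfin H).card ≤ (n - 1) * (Afin H).card := by
  classical
  have h1 : (Pfin H).card ≤ (n - 1) * ((Pfin H).image (fun p => (inl p.1 : Vt n))).card := by
    apply Finset.card_le_mul_card_image
    intro y hy
    obtain ⟨p₀, hp₀, rfl⟩ := mem_image.1 hy
    set u := p₀.1
    have : ((Pfin H).filter (fun p => (inl p.1 : Vt n) = inl u)).card ≤ (univ.erase u).card := by
      apply Finset.card_le_card_of_injOn
        (fun p => if h : p.1 ∈ p.2.val then Sym2.Mem.other' h else p.1)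
      · intro q hq
        rw [Finset.mem_coe, mem_filter] at hq
        have hq1 : q.1 = u := Sum.inl.inj hq.2
        have hmem : q.1 ∈ q.2.val := adj_inl_inr.1 (mem_Pfin.1 hq.1).adj_sub
        simp only [Finset.mem_coe]
        rw [dif_pos hmem]
        exact Finset.mem_erase.2 ⟨by rw [← hq1]; exact other_ne hmem, mem_univ _⟩
      · intro q hq q' hq' heq
        simp only [Finset.coe_filter, Set.mem_setOf_eq] at hq hq'
        have hq1 : q.1 = u := Sum.inl.inj hq.2
        have hq1' : q'.1 = u := Sum.inl.inj hq'.2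
        have hmem : q.1 ∈ q.2.val := adj_inl_inr.1 (mem_Pfin.1 hq.1).adj_sub
        have hmem' : q'.1 ∈ q'.2.val := adj_inl_inr.1 (mem_Pfin.1 hq'.1).adj_sub
        simp only [dif_pos hmem, dif_pos hmem'] at heq
        have h2 : q.2 = q'.2 := by
          apply Subtype.ext
          rw [← Sym2.other_spec' hmem, ← Sym2.other_spec' hmem', heq, hq1]
          exact congrArg (fun z => s(z, Sym2.Mem.other' hmem')) hq1'.symm
        exact Prod.ext (hq1.trans hq1'.symm) h2
    calc ((Pfin H).filter (fun p => (inl p.1 : Vt n) = inl u)).card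
        ≤ (univ.erase u).card := this
      _ = n - 1 := by rw [Finset.card_erase_of_mem (mem_univ _), card_univ, Fintype.card_fin]
  refine le_trans h1 (Nat.mul_le_mul_left _ (Finset.card_le_card ?_))
  intro y hy
  obtain ⟨p, hp, rfl⟩ := mem_image.1 hy
  rw [Afin, mem_filter, Set.Finite.mem_toFinset]
  exact ⟨(mem_Pfin.1 hp).fst_mem, rfl⟩

lemma algebra_bound (E a b v N : ℕ) (hN : 1 ≤ N) (h1 : E ≤ (N - 1) * a) (h2 : E ≤ 2 * b)
    (hv : a + b = v) (hvpos : 0 < v) :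
    (2 * E : ℚ) / (v : ℚ) ≤ 4 - 8 / ((N : ℚ) + 1) := by
  have hN1 : (1 : ℚ) ≤ N := by exact_mod_cast hN
  have h1' : (E : ℚ) ≤ ((N : ℚ) - 1) * a := by
    have := (Nat.cast_le (α := ℚ)).2 h1
    rwa [Nat.cast_mul, Nat.cast_sub hN, Nat.cast_one] at this
  have h2' : (E : ℚ) ≤ 2 * b := by exact_mod_cast h2
  have hv' : (a : ℚ) + b = v := by exact_mod_cast hv
  have hvq : (0 : ℚ) < v := by exact_mod_cast hvpos
  have hNq : (0 : ℚ) < (N : ℚ) + 1 := by linarith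
  have key : (4 : ℚ) - 8 / ((N : ℚ) + 1) = (4 * N - 4) / ((N : ℚ) + 1) := by
    field_simp
    ring
  rw [key, div_le_div_iff₀ hvq hNq]
  have t1 : (E : ℚ) * ((N : ℚ) - 1) ≤ 2 * b * ((N : ℚ) - 1) :=
    mul_le_mul_of_nonneg_right h2' (by linarith)
  nlinarith [h1', hv', t1]

lemma card_Pfin_top : (Pfin (⊤ : (subdividedComplete n).Subgraph)).card = 2 * Nat.choose n 2 := by
  classical
  have hmem : ∀ p : Fin n × SubV n, p ∈ Pfin (⊤ : (subdividedComplete n).Subgraph) ↔ p.1 ∈ p.2.val := by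
    intro p
    rw [mem_Pfin, SimpleGraph.Subgraph.top_adj, adj_inl_inr]
  rw [Finset.card_eq_sum_card_fiberwise (f := fun p => p.2) (t := univ) (fun _ _ => mem_univ _)]
  have hfib : ∀ e : SubV n,
      ((Pfin (⊤ : (subdividedComplete n).Subgraph)).filter (fun p => p.2 = e)).card = 2 := by
    intro e
    obtain ⟨x, y, hne, hxy⟩ := subV_rep e
    have hset : (Pfin (⊤ : (subdividedComplete n).Subgraph)).filter (fun p => p.2 = e)
        = {(x, e), (y, e)} := by
      ext p
      simp only [mem_filter, hmem, mem_insert, mem_singleton]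
      constructor
      · rintro ⟨h1, rfl⟩
        rw [hxy, Sym2.mem_iff] at h1
        rcases h1 with h | h
        · left; rw [Prod.ext_iff]; exact ⟨h, rfl⟩
        · right; rw [Prod.ext_iff]; exact ⟨h, rfl⟩
      · rintro (rfl | rfl)
        · exact ⟨by rw [hxy]; simp, rfl⟩
        · exact ⟨by rw [hxy]; simp, rfl⟩
    rw [hset, Finset.card_insert_of_notMem (by simp [Prod.ext_iff, hne]), Finset.card_singleton]
  rw [Finset.sum_congr rfl (fun e _ => hfib e), Finset.sum_const, smul_eq_mul, card_univ,
    Sym2.card_subtype_not_diag, Fintype.card_fin, mul_comm]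

lemma card_verts_top :
    (⊤ : (subdividedComplete n).Subgraph).verts.ncard = n + Nat.choose n 2 := by
  rw [SimpleGraph.Subgraph.verts_top, Set.ncard_univ, Nat.card_eq_fintype_card,
    Fintype.card_sum, Fintype.card_fin, Sym2.card_subtype_not_diag, Fintype.card_fin]

lemma top_ratio (hn : 0 < n) :
    (2 * ((2 * Nat.choose n 2 : ℕ) : ℚ)) / (((n + Nat.choose n 2 : ℕ)) : ℚ)
      = 4 - 8 / ((n : ℚ) + 1) := by
  have h1 : (1 : ℚ) ≤ n := by exact_mod_cast hn
  have hc : ((Nat.choose n 2 : ℕ) : ℚ) = n * ((n : ℚ) - 1) / 2 := Nat.cast_choose_two ℚ n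
  have hd : (n : ℚ) + (n : ℚ) * ((n : ℚ) - 1) / 2 ≠ 0 := by nlinarith
  have hn1 : (0 : ℚ) < (n : ℚ) + 1 := by positivity
  have key : (4 : ℚ) - 8 / ((n : ℚ) + 1) = (4 * n - 4) / ((n : ℚ) + 1) := by
    field_simp
    ring
  push_cast
  rw [hc, key, div_eq_div_iff hd hn1.ne']
  ring

lemma no_star {k : ℕ} (hk : 0 < k) (hbig : n > k ^ 2 + k) :
    ¬ ∃ c : Vt n → Fin k, IsStarColoring (subdividedComplete n) c := by
  classical
  rintro ⟨c, hproper, hstar⟩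
  obtain ⟨α, -, hα⟩ := Finset.exists_lt_card_fiber_of_mul_lt_card_of_maps_to
    (s := (univ : Finset (Fin n))) (t := (univ : Finset (Fin k)))
    (f := fun u => c (inl u)) (n := k + 1) (fun a _ => mem_univ _) (by
      rw [card_univ, card_univ, Fintype.card_fin, Fintype.card_fin]
      calc k * (k + 1) = k ^ 2 + k := by ring
        _ < n := hbig)
  set S := univ.filter (fun u : Fin n => c (inl u) = α) with hS
  have hαS : k + 1 < S.card := hα
  obtain ⟨u₀, hu₀⟩ := Finset.card_pos.1 (lt_of_le_of_lt (Nat.zero_le _) hαS)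
  have hu₀S : c (inl u₀) = α := (mem_filter.1 hu₀).2
  set S' := S.erase u₀ with hS'def
  have hS' : k < S'.card := by
    have h : S'.card = S.card - 1 := by
      rw [hS'def]
      exact Finset.card_erase_of_mem hu₀
    omega
  have hwdef : ∀ v : Fin n, v ≠ u₀ → ¬ (s(u₀, v) : Sym2 (Fin n)).IsDiag := by
    intro v hv h
    exact hv (Sym2.mk_isDiag_iff.1 h).symm
  set g : Fin n → Fin k := fun v =>
    if h : ¬ (s(u₀, v) : Sym2 (Fin n)).IsDiag then c (inr ⟨s(u₀, v), h⟩) else α with hg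
  have hmaps : ∀ v ∈ S', g v ∈ (univ.erase α) := by
    intro v hv
    have hvne : v ≠ u₀ := Finset.ne_of_mem_erase hv
    have hnd := hwdef v hvne
    have hadj : (subdividedComplete n).Adj (inl u₀) (inr ⟨s(u₀, v), hnd⟩) :=
      adj_inl_inr.2 (by simp)
    have hne : c (inr ⟨s(u₀, v), hnd⟩) ≠ α := by
      intro h
      exact (hproper hadj) (by rw [hu₀S, h])
    simp only [hg, dif_pos hnd]
    exact Finset.mem_erase.2 ⟨hne, mem_univ _⟩
  obtain ⟨β, -, hβ⟩ := Finset.exists_lt_card_fiber_of_mul_lt_card_of_maps_to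
    (n := 1) hmaps (by
      rw [Finset.card_erase_of_mem (mem_univ _), card_univ, Fintype.card_fin]
      omega)
  obtain ⟨v, hv, v', hv', hvv'⟩ := Finset.one_lt_card.1 hβ
  rw [mem_filter] at hv hv'
  obtain ⟨hvS', hgv⟩ := hv
  obtain ⟨hv'S', hgv'⟩ := hv'
  have hvne : v ≠ u₀ := Finset.ne_of_mem_erase hvS'
  have hv'ne : v' ≠ u₀ := Finset.ne_of_mem_erase hv'S'
  have hvα : c (inl v) = α := (mem_filter.1 (Finset.mem_of_mem_erase hvS')).2
  have hnd := hwdef v hvne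
  have hnd' := hwdef v' hv'ne
  set e₁ : SubV n := ⟨s(u₀, v), hnd⟩ with he₁
  set e₂ : SubV n := ⟨s(u₀, v'), hnd'⟩ with he₂
  have hc1 : c (inr e₁) = β := by
    simp only [hg, dif_pos hnd] at hgv
    exact hgv
  have hc2 : c (inr e₂) = β := by
    simp only [hg, dif_pos hnd'] at hgv'
    exact hgv'
  have hadj12 : (subdividedComplete n).Adj (inl v) (inr e₁) := adj_inl_inr.2 (by simp [he₁])
  have hadj23 : (subdividedComplete n).Adj (inr e₁) (inl u₀) :=
    (adj_inl_inr.2 (by simp [he₁])).symm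
  have hadj34 : (subdividedComplete n).Adj (inl u₀) (inr e₂) := adj_inl_inr.2 (by simp [he₂])
  have he12 : e₁ ≠ e₂ := by
    intro h
    have : (s(u₀, v) : Sym2 (Fin n)) = s(u₀, v') := congrArg Subtype.val h
    exact hvv' (Sym2.congr_right.1 this)
  refine hstar (inl v) (inr e₁) (inl u₀) (inr e₂) hadj12 hadj23 hadj34
    (by simp) (by simp [hvne]) (by simp) (by simp) (by simp [he12]) (by simp) ?_
  rw [hvα, hc1, hu₀S, hc2]
  have hpair : ({α, β, α, β} : Finset (Fin k)) = {α, β} := by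
    ext x
    simp only [mem_insert, mem_singleton]
    tauto
  rw [hpair]
  exact (Finset.card_insert_le _ _).trans (by simp)

end Stmt17Aux

open Stmt17Aux Sum in
/-- For every positive `k`, the graph `G_n` obtained from `K_n` by
subdividing every edge once satisfies `mad(G_n) = 4 - 8/(n+1)` (the ratio `2|E(H)|/|V(H)|`
is at most this value for every nonempty subgraph `H`, with equality attained), and if
`n > k² + k` then `G_n` has no star coloring with `k` colors. -/
theorem stmt_17 (k n : ℕ) (hk : 0 < k) (hn : 0 < n) :
    (∀ H : (subdividedComplete n).Subgraph, H.verts.Nonempty →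
      (2 * H.edgeSet.ncard : ℚ) / (H.verts.ncard : ℚ) ≤ 4 - 8 / ((n : ℚ) + 1)) ∧
    (∃ H : (subdividedComplete n).Subgraph, H.verts.Nonempty ∧
      (2 * H.edgeSet.ncard : ℚ) / (H.verts.ncard : ℚ) = 4 - 8 / ((n : ℚ) + 1)) ∧
    (n > k ^ 2 + k → ¬ ∃ c : Fin n ⊕ {e : Sym2 (Fin n) // ¬ e.IsDiag} → Fin k,
      IsStarColoring (subdividedComplete n) c) := by
  refine ⟨?_, ?_, ?_⟩
  · intro H hne
    refine algebra_bound H.edgeSet.ncard (Afin H).card (Bfin H).card H.verts.ncard n hn ?_ ?_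
      (verts_card_eq H).symm ((Set.ncard_pos (Set.toFinite _)).2 hne)
    · rw [card_edgeSet]
      exact card_Pfin_le_left H
    · rw [card_edgeSet]
      exact card_Pfin_le_right H
  · refine ⟨⊤, ⟨inl ⟨0, hn⟩, by simp [SimpleGraph.Subgraph.verts_top]⟩, ?_⟩
    rw [card_edgeSet, card_Pfin_top, card_verts_top]
    exact top_ratio hn
  · intro hbig
    exact no_star hk hbig
end

section
/- If δ(G) = 2 and the average degree of G is less than 8/3, then G has two adjacent 2-vertices, or some component of the subgraph H of G induced by the degree-3 vertices is a tree such that every edge of G with exactly one endpoint in that component has its other endpoint of degree 2 in G. -/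
open SimpleGraph Finset

set_option linter.unusedSectionVars false

namespace Stmt18

variable {V : Type*} [Fintype V] [DecidableEq V]

lemma reach_del {G : SimpleGraph V} {v w : V}
    (hvw : (G \ fromEdgeSet {s(v, w)}).Reachable v w) {a b : V} (h : G.Reachable a b) :
    (G \ fromEdgeSet {s(v, w)}).Reachable a b := by
  obtain ⟨p⟩ := h
  induction p with
  | nil => rfl
  | cons hadj q ih =>
    rename_i x y z
    refine Reachable.trans ?_ ih
    by_cases he : s(x, y) = s(v, w)
    · rw [Sym2.eq_iff] at he
      rcases he with ⟨rfl, rfl⟩ | ⟨rfl, rfl⟩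
      · exact hvw
      · exact hvw.symm
    · exact Adj.reachable ⟨hadj, by simp [he]⟩

lemma edgeFinset_del {G : SimpleGraph V} [Fintype G.edgeSet] {v w : V}
    [Fintype (G \ fromEdgeSet {s(v, w)}).edgeSet] :
    (G \ fromEdgeSet {s(v, w)}).edgeFinset = G.edgeFinset.erase s(v, w) := by
  ext e
  simp only [mem_edgeFinset, Finset.mem_erase, edgeSet_sdiff, edgeSet_fromEdgeSet,
    Set.mem_diff, Set.mem_setOf_eq, Set.mem_singleton_iff]
  constructor
  · rintro ⟨he, hne⟩
    exact ⟨fun hh => hne ⟨hh, G.not_isDiag_of_mem_edgeSet he⟩, he⟩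
  · rintro ⟨hne, he⟩
    exact ⟨he, fun hh => hne hh.1⟩

lemma connected_card_le_aux :
    ∀ (n : ℕ) (G : SimpleGraph V) [Fintype G.edgeSet], G.edgeFinset.card = n →
      G.Connected → Fintype.card V ≤ n + 1 := by
  intro n
  induction n using Nat.strong_induction_on with
  | _ n ih =>
    intro G _ hcard hconn
    classical
    by_cases hac : G.IsAcyclic
    · have ht : G.IsTree := ⟨hconn, hac⟩
      have := ht.card_edgeFinset
      omega
    · rw [isAcyclic_iff_forall_adj_isBridge] at hac
      push_neg at hac
      obtain ⟨v, w, hadj, hnb⟩ := hac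
      rw [isBridge_iff] at hnb
      have hvw : (G \ fromEdgeSet {s(v, w)}).Reachable v w := by
        by_contra hc; exact hnb hc
      set G' := G \ fromEdgeSet {s(v, w)} with hG'
      have hconn' : G'.Connected := by
        rw [connected_iff] at hconn ⊢
        exact ⟨fun a b => reach_del hvw (hconn.1 a b), hconn.2⟩
      have hce : G'.edgeFinset.card = n - 1 := by
        rw [edgeFinset_del, Finset.card_erase_of_mem (by rwa [mem_edgeFinset, mem_edgeSet]),
          hcard]
      have hn : 0 < n := by
        rw [← hcard]
        exact Finset.card_pos.mpr ⟨s(v, w), by rwa [mem_edgeFinset, mem_edgeSet]⟩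
      have := ih (n - 1) (by omega) G' hce hconn'
      omega

lemma connected_card_le (G : SimpleGraph V) [Fintype G.edgeSet] (h : G.Connected) :
    Fintype.card V ≤ G.edgeFinset.card + 1 :=
  connected_card_le_aux _ G rfl h

lemma acyclic_of_card (G : SimpleGraph V) [Fintype G.edgeSet] (h : G.Connected)
    (hc : G.edgeFinset.card + 1 ≤ Fintype.card V) : G.IsAcyclic := by
  classical
  by_contra hac
  rw [isAcyclic_iff_forall_adj_isBridge] at hac
  push_neg at hac
  obtain ⟨v, w, hadj, hnb⟩ := hac
  rw [isBridge_iff] at hnb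
  have hvw : (G \ fromEdgeSet {s(v, w)}).Reachable v w := by
    by_contra hcc; exact hnb hcc
  set G' := G \ fromEdgeSet {s(v, w)} with hG'
  have hconn' : G'.Connected := by
    rw [connected_iff] at h ⊢
    exact ⟨fun a b => reach_del hvw (h.1 a b), h.2⟩
  have hce : G'.edgeFinset.card = G.edgeFinset.card - 1 := by
    rw [edgeFinset_del, Finset.card_erase_of_mem (by rwa [mem_edgeFinset, mem_edgeSet])]
  have hn : 0 < G.edgeFinset.card :=
    Finset.card_pos.mpr ⟨s(v, w), by rwa [mem_edgeFinset, mem_edgeSet]⟩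
  have := connected_card_le G' hconn'
  omega

lemma induce_degree (G : SimpleGraph V) [DecidableRel G.Adj] (T : Set V)
    [DecidablePred (· ∈ T)] (v : ↥T) [Fintype ((G.induce T).neighborSet v)] :
    (G.induce T).degree v = ((G.neighborFinset ↑v).filter (· ∈ T)).card := by
  rw [← card_neighborFinset_eq_degree]
  refine Finset.card_bij (fun a _ => (a : V)) ?_ ?_ ?_
  · intro a ha
    rw [mem_neighborFinset] at ha
    simp only [Finset.mem_filter, mem_neighborFinset]
    exact ⟨ha, a.2⟩
  · intro a _ b _ h
    exact Subtype.ext h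
  · intro b hb
    simp only [Finset.mem_filter, mem_neighborFinset] at hb
    exact ⟨⟨b, hb.2⟩, by rw [mem_neighborFinset]; exact hb.1, rfl⟩

lemma lift_walk {G H : SimpleGraph V} (hHG : H ≤ G) {T : Set V}
    (hcl : ∀ ⦃u x : V⦄, u ∈ T → H.Adj u x → x ∈ T) :
    ∀ {a b : V}, H.Walk a b → ∀ ha : a ∈ T,
      ∃ hb : b ∈ T, (G.induce T).Reachable ⟨a, ha⟩ ⟨b, hb⟩ := by
  intro a b p
  induction p with
  | nil => exact fun ha => ⟨ha, Reachable.refl _⟩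
  | cons h q ih =>
    intro ha
    rename_i x y z
    have hy : y ∈ T := hcl ha h
    obtain ⟨hb, hr⟩ := ih hy
    exact ⟨hb, Reachable.trans (Adj.reachable (by exact hHG h)) hr⟩

/-- Degree partition of the neighborhood. -/
lemma neighbor_partition (G : SimpleGraph V) [DecidableRel G.Adj]
    (hdeg2 : ∀ v, 2 ≤ G.degree v) (v : V) :
    ((G.neighborFinset v).filter (fun x => G.degree x = 2)).card
      + ((G.neighborFinset v).filter (fun x => G.degree x = 3)).card
      + ((G.neighborFinset v).filter (fun x => 4 ≤ G.degree x)).card = G.degree v := by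
  rw [Finset.card_filter, Finset.card_filter, Finset.card_filter,
    ← Finset.sum_add_distrib, ← Finset.sum_add_distrib]
  have : ∀ x ∈ G.neighborFinset v,
      ((if G.degree x = 2 then 1 else 0) + (if G.degree x = 3 then 1 else 0)
        + (if 4 ≤ G.degree x then 1 else 0)) = 1 := by
    intro x _
    have := hdeg2 x
    split_ifs <;> omega
  rw [Finset.sum_congr rfl this, Finset.sum_const, smul_eq_mul, mul_one,
    card_neighborFinset_eq_degree]

/-- Double counting: total sent equals total received. -/
lemma sent_eq_recv (G : SimpleGraph V) [DecidableRel G.Adj] (P : V → V → Prop)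
    [∀ a b : V, Decidable (P a b)] :
    ∑ v : V, ((G.neighborFinset v).filter (fun u => P v u)).card
      = ∑ v : V, ((G.neighborFinset v).filter (fun u => P u v)).card := by
  simp only [neighborFinset_eq_filter, Finset.filter_filter, Finset.card_filter]
  rw [Finset.sum_comm]
  refine Finset.sum_congr rfl fun v _ => Finset.sum_congr rfl fun u _ => ?_
  have h : G.Adj u v ↔ G.Adj v u := G.adj_comm u v
  simp only [h]


/-- The auxiliary graph on the degree-3 vertices. -/
def Hgr (G : SimpleGraph V) [DecidableRel G.Adj] : SimpleGraph V where
  Adj a b := G.Adj a b ∧ G.degree a = 3 ∧ G.degree b = 3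
  symm := ⟨fun a b h => ⟨h.1.symm, h.2.2, h.2.1⟩⟩
  loopless := ⟨fun a h => G.loopless.irrefl a h.1⟩

lemma Hgr_le (G : SimpleGraph V) [DecidableRel G.Adj] : Hgr G ≤ G := fun {a b} h => h.1

lemma Hgr_reach3 (G : SimpleGraph V) [DecidableRel G.Adj] :
    ∀ {a b : V}, (Hgr G).Walk a b → G.degree a = 3 → G.degree b = 3 := by
  intro a b p
  induction p with
  | nil => exact id
  | cons hadj q ih => exact fun _ => ih hadj.2.2

/-- The component of `v` in `Hgr G`, as a finset. -/
noncomputable def cfun (G : SimpleGraph V) [DecidableRel G.Adj] (v : V) : Finset V :=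
  @Finset.filter _ (fun u => (Hgr G).Reachable v u) (Classical.decPred _) Finset.univ

lemma mem_cfun {G : SimpleGraph V} [DecidableRel G.Adj] {v u : V} :
    u ∈ cfun G v ↔ (Hgr G).Reachable v u := by
  simp [cfun]

def Psend (G : SimpleGraph V) [DecidableRel G.Adj] (a b : V) : Prop :=
  G.degree b = 2 ∨ (4 ≤ G.degree a ∧ G.degree b = 3)

instance (G : SimpleGraph V) [DecidableRel G.Adj] (a b : V) : Decidable (Psend G a b) := by
  unfold Psend; infer_instance

def tdeg (G : SimpleGraph V) [DecidableRel G.Adj] (v : V) : ℕ :=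
  ((G.neighborFinset v).filter (fun x => G.degree x = 2)).card

def rdeg (G : SimpleGraph V) [DecidableRel G.Adj] (v : V) : ℕ :=
  ((G.neighborFinset v).filter (fun x => 4 ≤ G.degree x)).card

def sent (G : SimpleGraph V) [DecidableRel G.Adj] (v : V) : ℕ :=
  ((G.neighborFinset v).filter (fun u => Psend G v u)).card

def recv (G : SimpleGraph V) [DecidableRel G.Adj] (v : V) : ℕ :=
  ((G.neighborFinset v).filter (fun u => Psend G u v)).card

def mu (G : SimpleGraph V) [DecidableRel G.Adj] (v : V) : ℤ :=
  3 * G.degree v - 8 + recv G v - sent G v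

lemma sum_mu (G : SimpleGraph V) [DecidableRel G.Adj] :
    ∑ v : V, mu G v = ∑ v : V, (3 * (G.degree v : ℤ) - 8) := by
  unfold mu
  rw [Finset.sum_sub_distrib, Finset.sum_add_distrib]
  have h1 : ∑ v : V, (recv G v : ℤ) = ((∑ v : V, recv G v : ℕ) : ℤ) := (Nat.cast_sum _ _).symm
  have h2 : ∑ v : V, (sent G v : ℤ) = ((∑ v : V, sent G v : ℕ) : ℤ) := (Nat.cast_sum _ _).symm
  have h3 : ∑ v : V, sent G v = ∑ v : V, recv G v := sent_eq_recv G (Psend G)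
  rw [h1, h2, h3]
  ring

lemma mu_eq_of_deg3 (G : SimpleGraph V) [DecidableRel G.Adj] {v : V} (hv : G.degree v = 3) :
    mu G v = 1 + rdeg G v - tdeg G v := by
  unfold mu recv sent rdeg tdeg
  have h1 : (G.neighborFinset v).filter (fun u => Psend G u v)
      = (G.neighborFinset v).filter (fun x => 4 ≤ G.degree x) := by
    refine Finset.filter_congr fun x _ => ?_
    unfold Psend
    constructor
    · rintro (h | h) <;> omega
    · intro h; right; exact ⟨h, hv⟩
  have h2 : (G.neighborFinset v).filter (fun u => Psend G v u)
      = (G.neighborFinset v).filter (fun x => G.degree x = 2) := by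
    refine Finset.filter_congr fun x _ => ?_
    unfold Psend
    constructor
    · rintro (h | h) <;> omega
    · intro h; left; exact h
  rw [h1, h2, hv]
  ring

lemma mu_eq_of_deg2 (G : SimpleGraph V) [DecidableRel G.Adj]
    (hA : ∀ a b : V, G.Adj a b → G.degree a = 2 → G.degree b ≠ 2)
    {v : V} (hv : G.degree v = 2) : mu G v = 0 := by
  unfold mu recv sent
  have h1 : (G.neighborFinset v).filter (fun u => Psend G u v) = G.neighborFinset v := by
    refine Finset.filter_true_of_mem fun x _ => ?_
    unfold Psend
    exact Or.inl hv
  have h2 : (G.neighborFinset v).filter (fun u => Psend G v u) = ∅ := by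
    refine Finset.filter_eq_empty_iff.mpr fun x hx => ?_
    rw [mem_neighborFinset] at hx
    unfold Psend
    have := hA v x hx hv
    rintro (h | h) <;> omega
  rw [h1, h2, card_neighborFinset_eq_degree, hv]
  simp

lemma mu_nonneg_of_deg4 (G : SimpleGraph V) [DecidableRel G.Adj]
    {v : V} (hv : 4 ≤ G.degree v) : 0 ≤ mu G v := by
  unfold mu
  have h1 : sent G v ≤ G.degree v := by
    rw [← card_neighborFinset_eq_degree]
    exact Finset.card_filter_le _ _
  omega

/-- The component inequality. -/
lemma component_bound (G : SimpleGraph V) [DecidableRel G.Adj] (C : Finset V)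
    (hdeg2 : ∀ v, 2 ≤ G.degree v)
    (h3 : ∀ u ∈ C, G.degree u = 3)
    (hcl : ∀ u ∈ C, ∀ x : V, G.Adj u x → G.degree x = 3 → x ∈ C)
    (hconn : (G.induce (↑C : Set V)).Connected)
    (hout : (G.induce (↑C : Set V)).IsAcyclic →
      ∃ u ∈ C, ∃ x : V, x ∉ C ∧ G.Adj u x ∧ 4 ≤ G.degree x) :
    0 ≤ ∑ u ∈ C, ((1 : ℤ)
      + ((G.neighborFinset u).filter (fun x => 4 ≤ G.degree x)).card
      - ((G.neighborFinset u).filter (fun x => G.degree x = 2)).card) := by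
  classical
  set T : Set V := (↑C : Set V) with hT
  have hk : Fintype.card ↥T = C.card := by simp [hT]
  -- handshake in the induced graph
  have hs2 : ∑ u ∈ C, ((G.neighborFinset u).filter (fun x => G.degree x = 3)).card
      = 2 * (G.induce T).edgeFinset.card := by
    have h1 : ∀ u ∈ C, ((G.neighborFinset u).filter (fun x => G.degree x = 3)).card
        = ((G.neighborFinset u).filter (· ∈ T)).card := by
      intro u hu
      congr 1
      refine Finset.filter_congr fun x hx => ?_
      rw [mem_neighborFinset] at hx
      constructor
      · intro h3x
        exact hcl u hu x hx h3x
      · intro hxT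
        exact h3 x hxT
    rw [Finset.sum_congr rfl h1]
    have h2 : ∑ u ∈ C, ((G.neighborFinset u).filter (· ∈ T)).card
        = ∑ x : ↥T, (G.induce T).degree x := by
      rw [← Finset.sum_coe_sort C (fun u => ((G.neighborFinset u).filter (· ∈ T)).card)]
      exact Finset.sum_congr rfl fun x _ => (induce_degree G T x).symm
    rw [h2, SimpleGraph.sum_degrees_eq_twice_card_edges]
  have hke : C.card ≤ (G.induce T).edgeFinset.card + 1 := by
    have := connected_card_le (G.induce T) hconn
    omega
  -- k ≤ e + R
  have hkeR : C.card ≤ (G.induce T).edgeFinset.card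
      + ∑ u ∈ C, ((G.neighborFinset u).filter (fun x => 4 ≤ G.degree x)).card := by
    rcases Nat.lt_or_ge C.card ((G.induce T).edgeFinset.card + 1) with hlt | hge
    · omega
    · have heq : C.card = (G.induce T).edgeFinset.card + 1 := by omega
      have hac : (G.induce T).IsAcyclic := by
        apply acyclic_of_card (G.induce T) hconn
        omega
      obtain ⟨u, hu, x, hxC, hadj, hx4⟩ := hout hac
      have hr1 : 1 ≤ ((G.neighborFinset u).filter (fun x => 4 ≤ G.degree x)).card := by
        refine Finset.card_pos.mpr ⟨x, ?_⟩
        rw [Finset.mem_filter, mem_neighborFinset]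
        exact ⟨hadj, hx4⟩
      have hR : 1 ≤ ∑ u ∈ C, ((G.neighborFinset u).filter (fun x => 4 ≤ G.degree x)).card :=
        le_trans hr1 (Finset.single_le_sum
          (f := fun u => ((G.neighborFinset u).filter (fun x => 4 ≤ G.degree x)).card)
          (fun _ _ => Nat.zero_le _) hu)
      omega
  -- now compute the sum
  have hpt : ∀ u ∈ C, ((1 : ℤ)
      + ((G.neighborFinset u).filter (fun x => 4 ≤ G.degree x)).card
      - ((G.neighborFinset u).filter (fun x => G.degree x = 2)).card)
      = 2 * ((G.neighborFinset u).filter (fun x => 4 ≤ G.degree x)).card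
        + ((G.neighborFinset u).filter (fun x => G.degree x = 3)).card - 2 := by
    intro u hu
    have hp := neighbor_partition G hdeg2 u
    rw [h3 u hu] at hp
    omega
  rw [Finset.sum_congr rfl hpt]
  have hr : ∑ u ∈ C, (((G.neighborFinset u).filter (fun x => 4 ≤ G.degree x)).card : ℤ)
      = ((∑ u ∈ C, ((G.neighborFinset u).filter (fun x => 4 ≤ G.degree x)).card : ℕ) : ℤ) :=
    (Nat.cast_sum _ _).symm
  have hs : ∑ u ∈ C, (((G.neighborFinset u).filter (fun x => G.degree x = 3)).card : ℤ)
      = ((∑ u ∈ C, ((G.neighborFinset u).filter (fun x => G.degree x = 3)).card : ℕ) : ℤ) :=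
    (Nat.cast_sum _ _).symm
  rw [Finset.sum_sub_distrib, Finset.sum_add_distrib, ← Finset.mul_sum, hr, hs,
    Finset.sum_const, nsmul_eq_mul]
  omega

end Stmt18

/-- If `δ(G) = 2` and the average degree of `G` is less than `8/3`, then
`G` has two adjacent 2-vertices, or some component `T` of the subgraph of `G` induced by the
degree-3 vertices is a tree such that every edge of `G` with exactly one endpoint in `T` has
its other endpoint of degree 2 in `G`. -/
theorem stmt_18 {V : Type*} [Fintype V] [DecidableEq V] [Nonempty V]
    (G : SimpleGraph V) [DecidableRel G.Adj] (hδ : G.minDegree = 2)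
    (havg : (2 * G.edgeFinset.card : ℚ) / (Fintype.card V : ℚ) < 8 / 3) :
    (∃ v w : V, G.Adj v w ∧ G.degree v = 2 ∧ G.degree w = 2) ∨
    (∃ T : Set V, T.Nonempty ∧
      (∀ v ∈ T, G.degree v = 3) ∧
      (∀ u ∈ T, ∀ v : V, G.Adj u v → G.degree v = 3 → v ∈ T) ∧
      (G.induce T).Connected ∧ (G.induce T).IsAcyclic ∧
      (∀ u ∈ T, ∀ v : V, v ∉ T → G.Adj u v → G.degree v = 2)) := by
  classical
  by_contra hcon
  push_neg at hcon
  obtain ⟨hA, hB⟩ := hcon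
  have hdeg2 : ∀ v : V, 2 ≤ G.degree v := fun v => hδ ▸ G.minDegree_le_degree v
  -- the component bound, applied to components of `Hgr G`
  have hcomp : ∀ v0 : V, G.degree v0 = 3 →
      0 ≤ ∑ u ∈ Stmt18.cfun G v0, ((1 : ℤ)
        + ((G.neighborFinset u).filter (fun x => 4 ≤ G.degree x)).card
        - ((G.neighborFinset u).filter (fun x => G.degree x = 2)).card) := by
    intro v0 h30
    set C := Stmt18.cfun G v0 with hC
    have hv0C : v0 ∈ C := Stmt18.mem_cfun.mpr (Reachable.refl _)
    have hC3 : ∀ u ∈ C, G.degree u = 3 := by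
      intro u hu
      obtain ⟨p⟩ := Stmt18.mem_cfun.mp hu
      exact Stmt18.Hgr_reach3 G p h30
    have hCcl : ∀ u ∈ C, ∀ x : V, G.Adj u x → G.degree x = 3 → x ∈ C := by
      intro u hu x hadj hx3
      exact Stmt18.mem_cfun.mpr
        ((Stmt18.mem_cfun.mp hu).trans (Adj.reachable ⟨hadj, hC3 u hu, hx3⟩))
    have hCclH : ∀ ⦃u x : V⦄, u ∈ (↑C : Set V) → (Stmt18.Hgr G).Adj u x → x ∈ (↑C : Set V) := by
      intro u x hu hadj
      rw [Finset.mem_coe] at hu ⊢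
      exact hCcl u hu x hadj.1 hadj.2.2
    have hconn : (G.induce (↑C : Set V)).Connected := by
      rw [connected_iff]
      refine ⟨?_, ⟨⟨v0, hv0C⟩⟩⟩
      rintro ⟨a, ha⟩ ⟨b, hb⟩
      have hra : (Stmt18.Hgr G).Reachable v0 a := Stmt18.mem_cfun.mp (Finset.mem_coe.mp ha)
      have hrb : (Stmt18.Hgr G).Reachable v0 b := Stmt18.mem_cfun.mp (Finset.mem_coe.mp hb)
      obtain ⟨p⟩ := hra.symm.trans hrb
      obtain ⟨hb', hr⟩ := Stmt18.lift_walk (Stmt18.Hgr_le G) hCclH p ha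
      exact hr
    have hout : (G.induce (↑C : Set V)).IsAcyclic →
        ∃ u ∈ C, ∃ x : V, x ∉ C ∧ G.Adj u x ∧ 4 ≤ G.degree x := by
      intro hac
      obtain ⟨u, huT, x, hxT, hadj, hx2⟩ := hB (↑C : Set V) ⟨v0, hv0C⟩
        (fun v hv => hC3 v (Finset.mem_coe.mp hv))
        (fun u hu v hadj hv3 => Finset.mem_coe.mpr (hCcl u (Finset.mem_coe.mp hu) v hadj hv3))
        hconn hac
      have huC : u ∈ C := Finset.mem_coe.mp huT
      have hxC : x ∉ C := fun h => hxT (Finset.mem_coe.mpr h)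
      have hx3 : G.degree x ≠ 3 := fun h => hxC (hCcl u huC x hadj h)
      exact ⟨u, huC, x, hxC, hadj, by have := hdeg2 x; omega⟩
    exact Stmt18.component_bound G C hdeg2 hC3 hCcl hconn hout
  -- the global sum is nonnegative
  have hsum0 : 0 ≤ ∑ v : V, Stmt18.mu G v := by
    rw [← Finset.sum_filter_add_sum_filter_not Finset.univ (fun v => G.degree v = 3)
      (Stmt18.mu G)]
    have hpart2 : 0 ≤ ∑ v ∈ Finset.univ.filter (fun v => ¬G.degree v = 3), Stmt18.mu G v := by
      refine Finset.sum_nonneg fun v hv => ?_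
      rw [Finset.mem_filter] at hv
      have h2 := hdeg2 v
      rcases (by omega : G.degree v = 2 ∨ 4 ≤ G.degree v) with h | h
      · rw [Stmt18.mu_eq_of_deg2 G hA h]
      · exact Stmt18.mu_nonneg_of_deg4 G h
    have hpart1 : 0 ≤ ∑ v ∈ Finset.univ.filter (fun v => G.degree v = 3), Stmt18.mu G v := by
      set S3 := Finset.univ.filter (fun v => G.degree v = 3) with hS3
      rw [← Finset.sum_fiberwise_of_maps_to (g := Stmt18.cfun G) (t := S3.image (Stmt18.cfun G))
        (fun x hx => Finset.mem_image_of_mem _ hx) (Stmt18.mu G)]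
      refine Finset.sum_nonneg fun Cs hCs => ?_
      obtain ⟨v0, hv0, rfl⟩ := Finset.mem_image.mp hCs
      rw [hS3, Finset.mem_filter] at hv0
      have h30 : G.degree v0 = 3 := hv0.2
      have hfib : S3.filter (fun v => Stmt18.cfun G v = Stmt18.cfun G v0)
          = Stmt18.cfun G v0 := by
        ext u
        rw [Finset.mem_filter, hS3, Finset.mem_filter]
        constructor
        · rintro ⟨⟨-, hu3⟩, hcc⟩
          rw [← hcc]
          exact Stmt18.mem_cfun.mpr (Reachable.refl _)
        · intro hu
          have hru : (Stmt18.Hgr G).Reachable v0 u := Stmt18.mem_cfun.mp hu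
          have hu3 : G.degree u = 3 := by
            obtain ⟨p⟩ := hru
            exact Stmt18.Hgr_reach3 G p h30
          refine ⟨⟨Finset.mem_univ u, hu3⟩, ?_⟩
          ext y
          rw [Stmt18.mem_cfun, Stmt18.mem_cfun]
          exact ⟨fun h => hru.trans h, fun h => hru.symm.trans h⟩
      rw [hfib]
      have hmu3 : ∀ u ∈ Stmt18.cfun G v0, Stmt18.mu G u = (1 : ℤ)
          + ((G.neighborFinset u).filter (fun x => 4 ≤ G.degree x)).card
          - ((G.neighborFinset u).filter (fun x => G.degree x = 2)).card := by
        intro u hu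
        have hu3 : G.degree u = 3 := by
          obtain ⟨p⟩ := Stmt18.mem_cfun.mp hu
          exact Stmt18.Hgr_reach3 G p h30
        rw [Stmt18.mu_eq_of_deg3 G hu3]
        rfl
      rw [Finset.sum_congr rfl hmu3]
      exact hcomp v0 h30
    omega
  -- turn it into a degree-sum bound
  rw [Stmt18.sum_mu] at hsum0
  have hs := G.sum_degrees_eq_twice_card_edges
  have hcast : ∑ v : V, (3 * (G.degree v : ℤ) - 8)
      = 6 * (G.edgeFinset.card : ℤ) - 8 * (Fintype.card V : ℤ) := by
    rw [Finset.sum_sub_distrib, ← Finset.mul_sum, Finset.sum_const, Finset.card_univ,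
      nsmul_eq_mul]
    have : ∑ v : V, (G.degree v : ℤ) = ((∑ v : V, G.degree v : ℕ) : ℤ) := (Nat.cast_sum _ _).symm
    rw [this, hs]
    push_cast
    ring
  rw [hcast] at hsum0
  -- contradiction with the average degree bound
  have hn : (0 : ℚ) < (Fintype.card V : ℚ) := by
    exact_mod_cast Fintype.card_pos
  rw [div_lt_iff₀ hn] at havg
  have h6 : (8 : ℚ) * (Fintype.card V : ℚ) ≤ 6 * (G.edgeFinset.card : ℚ) := by
    exact_mod_cast (by omega : (8 : ℤ) * (Fintype.card V : ℤ) ≤ 6 * (G.edgeFinset.card : ℤ))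
  nlinarith [havg, h6]
end
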